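/- arXiv:1607.06393 — 5 statements merged into one kernel-verified Lean document; each statement's English description precedes it below -/
import Mathlib

section
/- For every real number c with 0 < c < 1, every integer r ≥ 2, and every real a with 0 < a ≤ c^(3·2^(r−2) − 1), the following holds. Let G be a simple graph on n vertices with independence number α(G) ≤ a·n, and let φ be an r-edge-coloring of G with colors {1,…,r}. Then there exists a partition V(G) = C_1 ∪ … ∪ C_r into r (possibly empty) pairwise disjoint sets such that for every i with 1 ≤ i ≤ r, the graph on vertex set C_i whose edges are those edges of G inside C_i that receive color i under φ has independence number at most c·n. -/
open Finset

/-- `α(G) ≤ b`: every independent set of `G` has size at most `b`. -/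
def indepLE {n : ℕ} (G : SimpleGraph (Fin n)) (b : ℝ) : Prop :=
  ∀ S : Finset (Fin n), (∀ u ∈ S, ∀ v ∈ S, u ≠ v → ¬ G.Adj u v) → (S.card : ℝ) ≤ b

/-- `(G, φ)` contains a monochromatic `K_k`. -/
def HasMonoClique {n r : ℕ} (G : SimpleGraph (Fin n)) (φ : G.edgeSet → Fin r) (k : ℕ) : Prop :=
  ∃ (S : Finset (Fin n)) (c : Fin r), S.card = k ∧
    ∀ u ∈ S, ∀ v ∈ S, u ≠ v → ∃ h : G.Adj u v, φ ⟨s(u, v), h⟩ = c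

/-- Number of `r`-edge-colorings of `G` with no monochromatic `K_k`. -/
noncomputable def numColorings {n : ℕ} (G : SimpleGraph (Fin n)) (r k : ℕ) : ℕ :=
  Nat.card {φ : G.edgeSet → Fin r // ¬ HasMonoClique G φ k}

/-- `k_s(G)`: the number of copies of `K_s` in `G`. -/
noncomputable def cliqueCount {n : ℕ} (G : SimpleGraph (Fin n)) (s : ℕ) : ℕ :=
  Nat.card {S : Finset (Fin n) // G.IsNClique s S}

/-- `b_k` from Ramsey–Turán theory. -/
noncomputable def bconst (k : ℕ) : ℝ :=
  if Odd k then ((k : ℝ) - 3) / (2 * ((k : ℝ) - 1))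
  else (3 * (k : ℝ) - 10) / (2 * (3 * (k : ℝ) - 4))

/-- `a_ℓ` in the even case: maximum over `x ∈ [0,1]`. -/
noncomputable def aEven (ℓ : ℕ) : ℝ :=
  sSup ((fun x : ℝ =>
    ((ℓ - 2).choose 3 : ℝ) * ((1 - x) / ((ℓ : ℝ) - 2)) ^ 3 +
    x * ((ℓ - 2).choose 2 : ℝ) * ((1 - x) / ((ℓ : ℝ) - 2)) ^ 2 +
    (1 / 2) * (x / 2) ^ 2 * (1 - x)) '' Set.Icc (0 : ℝ) 1)

section Aux


variable {n r : ℕ}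

def Pfree (G : SimpleGraph (Fin n)) (φ : G.edgeSet → Fin r)
    (P : Finset (Fin r)) (S : Finset (Fin n)) : Prop :=
  ∀ u ∈ S, ∀ v ∈ S, u ≠ v → ¬ ∃ h : G.Adj u v, φ ⟨s(u, v), h⟩ ∈ P

lemma Pfree_mono {G : SimpleGraph (Fin n)} {φ : G.edgeSet → Fin r}
    {P : Finset (Fin r)} {S T : Finset (Fin n)} (hST : S ⊆ T)
    (h : Pfree G φ P T) : Pfree G φ P S :=
  fun u hu v hv huv => h u (hST hu) v (hST hv) huv

lemma key (G : SimpleGraph (Fin n)) (φ : G.edgeSet → Fin r)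
    (c : ℝ) (hc0 : 0 < c) (hc1 : c < 1) :
    ∀ m : ℕ, ∀ P : Finset (Fin r), P.card ≤ m → P.Nonempty →
    ∀ b : ℝ, 0 < b → b ≤ c ^ P.card →
    ∀ U : Finset (Fin n),
    (∀ S : Finset (Fin n), S ⊆ U → Pfree G φ P S → (S.card : ℝ) ≤ b * n) →
    ∃ f : Fin n → Fin r, (∀ v ∈ U, f v ∈ P) ∧
      ∀ i : Fin r, ∀ S : Finset (Fin n), S ⊆ U.filter (fun v => f v = i) →
        Pfree G φ {i} S → (S.card : ℝ) ≤ c * n := by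
  have hn0 : (0:ℝ) ≤ (n:ℝ) := Nat.cast_nonneg n
  intro m
  induction m with
  | zero =>
    intro P hPm hPne
    exfalso
    rw [Nat.le_zero, Finset.card_eq_zero] at hPm
    exact hPne.ne_empty hPm
  | succ m IH =>
    intro P hPm hPne b hb0 hbc U hU
    rcases eq_or_lt_of_le (show 1 ≤ P.card from hPne.card_pos) with h1 | h2
    · -- base case : P.card = 1
      obtain ⟨i, hi⟩ := Finset.card_eq_one.mp h1.symm
      refine ⟨fun _ => i, fun v _ => by simp [hi], ?_⟩
      intro j S hS hSfree
      by_cases hij : i = j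
      · subst hij
        have : S ⊆ U := fun v hv => (Finset.mem_filter.mp (hS hv)).1
        have := hU S this (by rw [hi] at *; exact hSfree)
        have hbn : b * n ≤ c * n := by
          apply mul_le_mul_of_nonneg_right _ hn0
          calc b ≤ c ^ P.card := hbc
          _ = c := by rw [← h1, pow_one]
        linarith
      · have : S = ∅ := by
          rw [Finset.eq_empty_iff_forall_notMem]
          intro v hv
          have := (Finset.mem_filter.mp (hS hv)).2
          exact hij this
        rw [this]
        simp
        positivity
    · -- inductive step : P.card ≥ 2
      obtain ⟨i, hi⟩ := hPne
      set Q := P.erase i with hQ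
      have hQcard : Q.card = P.card - 1 := Finset.card_erase_of_mem hi
      have hQne : Q.Nonempty := by
        rw [← Finset.card_pos, hQcard]; omega
      have hQm : Q.card ≤ m := by omega
      have hbc' : b / c ≤ c ^ Q.card := by
        rw [div_le_iff₀ hc0]
        calc b ≤ c ^ P.card := hbc
        _ = c ^ Q.card * c := by
          rw [← pow_succ]
          congr 1
          omega
      have hb0' : 0 < b / c := div_pos hb0 hc0
      -- inner strong induction on U
      have inner : ∀ U : Finset (Fin n),
          (∀ S : Finset (Fin n), S ⊆ U → Pfree G φ P S → (S.card : ℝ) ≤ b * n) →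
          ∃ f : Fin n → Fin r, (∀ v ∈ U, f v ∈ P) ∧
            (∀ S : Finset (Fin n), S ⊆ U.filter (fun v => f v = i) →
              Pfree G φ {i} S → (S.card : ℝ) * ((b / c) * n) ≤ (b * n) * U.card) ∧
            (∀ j : Fin r, j ≠ i → ∀ S : Finset (Fin n),
              S ⊆ U.filter (fun v => f v = j) →
              Pfree G φ {j} S → (S.card : ℝ) ≤ c * n) := by
        intro U
        induction U using Finset.strongInduction with
        | _ U ihU =>
          intro hUP
          by_cases hA : ∀ S : Finset (Fin n), S ⊆ U → Pfree G φ Q S →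
              (S.card : ℝ) ≤ (b / c) * n
          · obtain ⟨f, hfQ, hf⟩ := IH Q hQm hQne (b / c) hb0' hbc' U hA
            refine ⟨f, fun v hv => Finset.erase_subset _ _ (hfQ v hv), ?_, ?_⟩
            · intro S hS hSfree
              have hSempty : S = ∅ := by
                rw [Finset.eq_empty_iff_forall_notMem]
                intro v hv
                have h1 := (Finset.mem_filter.mp (hS hv)).1
                have h2 := (Finset.mem_filter.mp (hS hv)).2
                have := hfQ v h1
                rw [h2] at this
                exact (Finset.notMem_erase i P) this
              rw [hSempty]
              simp
              positivity
            · intro j _ S hS hSfree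
              exact hf j S hS hSfree
          · push_neg at hA
            obtain ⟨B, hBU, hBQ, hBcard⟩ := hA
            have hBne : B.Nonempty := by
              rw [← Finset.card_pos]
              rcases Nat.eq_zero_or_pos B.card with h | h
              · exfalso
                rw [h] at hBcard
                push_cast at hBcard
                nlinarith [mul_nonneg (le_of_lt hb0') hn0]
              · exact h
            have hUB : U \ B ⊂ U := by
              apply Finset.sdiff_ssubset hBU hBne
            obtain ⟨f', hf'P, hf'i, hf'j⟩ := ihU (U \ B) hUB
              (fun S hS hfree => hUP S (hS.trans (Finset.sdiff_subset)) hfree)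
            classical
            refine ⟨fun v => if v ∈ B then i else f' v, ?_, ?_, ?_⟩
            · intro v hv
              by_cases hvB : v ∈ B
              · simp [hvB, hi]
              · simp only [hvB, if_neg, ite_false]
                exact hf'P v (Finset.mem_sdiff.mpr ⟨hv, hvB⟩)
            · -- color i invariant
              intro S hS hSfree
              have hsplit : (S ∩ B).card + (S \ B).card = S.card :=
                Finset.card_inter_add_card_sdiff S B
              -- S ∩ B is P-free
              have hSBfree : Pfree G φ P (S ∩ B) := by
                intro u hu v hv huv hedge
                obtain ⟨hadj, hcol⟩ := hedge
                have huS := Finset.mem_inter.mp hu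
                have hvS := Finset.mem_inter.mp hv
                have hne_i : φ ⟨s(u, v), hadj⟩ ≠ i := by
                  intro h
                  exact hSfree u huS.1 v hvS.1 huv ⟨hadj, by simp [h]⟩
                have hne_Q : φ ⟨s(u, v), hadj⟩ ∉ Q := by
                  intro h
                  exact hBQ u huS.2 v hvS.2 huv ⟨hadj, h⟩
                exact hne_Q (Finset.mem_erase.mpr ⟨hne_i, hcol⟩)
              have hSB_sub : S ∩ B ⊆ U := by
                intro v hv
                exact (Finset.mem_filter.mp (hS (Finset.mem_inter.mp hv).1)).1
              have h1 : ((S ∩ B).card : ℝ) ≤ b * n := hUP (S ∩ B) hSB_sub hSBfree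
              -- S \ B goes to recursion
              have hSdB : S \ B ⊆ (U \ B).filter (fun v => f' v = i) := by
                intro v hv
                obtain ⟨hvS, hvB⟩ := Finset.mem_sdiff.mp hv
                have hmem := Finset.mem_filter.mp (hS hvS)
                rw [Finset.mem_filter, Finset.mem_sdiff]
                refine ⟨⟨hmem.1, hvB⟩, ?_⟩
                have := hmem.2
                simpa [hvB] using this
              have h2 : ((S \ B).card : ℝ) * ((b / c) * n) ≤ (b * n) * (U \ B).card :=
                hf'i (S \ B) hSdB (Pfree_mono (Finset.sdiff_subset) hSfree)
              have hUcard : (U.card : ℝ) = ((U \ B).card : ℝ) + B.card := by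
                rw [Finset.card_sdiff_of_subset hBU]
                have := Finset.card_le_card hBU
                push_cast [Nat.cast_sub this]
                ring
              have hbn0 : (0:ℝ) ≤ b * n := by positivity
              have h3 : ((S ∩ B).card : ℝ) * ((b / c) * n) ≤ (b * n) * B.card := by
                calc ((S ∩ B).card : ℝ) * ((b / c) * n) ≤ (b * n) * ((b / c) * n) := by
                      apply mul_le_mul_of_nonneg_right h1
                      positivity
                _ ≤ (b * n) * B.card := by
                      apply mul_le_mul_of_nonneg_left (le_of_lt hBcard) hbn0
              have : (S.card : ℝ) = ((S ∩ B).card : ℝ) + ((S \ B).card : ℝ) := by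
                rw [← hsplit]; push_cast; ring
              rw [this, hUcard]
              nlinarith [h2, h3]
            · -- colors j ≠ i
              intro j hj S hS hSfree
              have hS' : S ⊆ (U \ B).filter (fun v => f' v = j) := by
                intro v hv
                have hmem := Finset.mem_filter.mp (hS hv)
                by_cases hvB : v ∈ B
                · exfalso
                  have := hmem.2
                  simp [hvB] at this
                  exact hj this.symm
                · rw [Finset.mem_filter, Finset.mem_sdiff]
                  refine ⟨⟨hmem.1, hvB⟩, ?_⟩
                  simpa [hvB] using hmem.2
              exact hf'j j hj S hS' hSfree
      obtain ⟨f, hfP, hfi, hfj⟩ := inner U hU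
      refine ⟨f, hfP, ?_⟩
      intro j S hS hSfree
      by_cases hij : j = i
      · subst hij
        have h := hfi S hS hSfree
        have hScard : (S.card : ℝ) ≤ n := by
          exact_mod_cast (Finset.card_le_univ S).trans_eq (by simp)
        rcases Nat.eq_zero_or_pos n with hn | hn
        · subst hn
          have hS0 : S.card = 0 := Nat.le_zero.mp ((Finset.card_le_univ S).trans_eq (by simp))
          rw [hS0]
          push_cast
          simp
        · have hnpos : (0:ℝ) < n := by exact_mod_cast hn
          have hUn : (U.card : ℝ) ≤ n := by
            exact_mod_cast (Finset.card_le_univ U).trans_eq (by simp)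
          have h' : (S.card : ℝ) * ((b / c) * n) ≤ (b * n) * n := by
            calc (S.card : ℝ) * ((b / c) * n) ≤ (b * n) * U.card := h
            _ ≤ (b * n) * n := by
                apply mul_le_mul_of_nonneg_left hUn
                positivity
          have hb' : (0:ℝ) < (b / c) * n := by positivity
          have h'' := (le_div_iff₀ hb').mpr h'
          have heq : (b * ↑n * ↑n) / ((b / c) * ↑n) = c * ↑n := by
            field_simp
          rw [heq] at h''
          exact h''
      · exact hfj j hij S hS hSfree

end Aux

theorem statement_0 (c : ℝ) (hc0 : 0 < c) (hc1 : c < 1) (r : ℕ) (hr : 2 ≤ r)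
    (a : ℝ) (ha0 : 0 < a) (ha : a ≤ c ^ (3 * 2 ^ (r - 2) - 1))
    (n : ℕ) (G : SimpleGraph (Fin n)) (hα : indepLE G (a * n))
    (φ : G.edgeSet → Fin r) :
    ∃ C : Fin r → Finset (Fin n),
      (∀ v : Fin n, ∃! i : Fin r, v ∈ C i) ∧
      ∀ i : Fin r, ∀ S : Finset (Fin n), (∀ v ∈ S, v ∈ C i) →
        (∀ u ∈ S, ∀ v ∈ S, u ≠ v → ¬ ∃ h : G.Adj u v, φ ⟨s(u, v), h⟩ = i) →
        (S.card : ℝ) ≤ c * n := by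
  have hrpos : 0 < r := by omega
  haveI : NeZero r := ⟨by omega⟩
  have hPcard : (Finset.univ : Finset (Fin r)).card = r := by simp
  have hre : r ≤ 3 * 2 ^ (r - 2) - 1 := by
    have h : r - 2 < 2 ^ (r - 2) := Nat.lt_two_pow_self
    omega
  have hac : a ≤ c ^ r := by
    calc a ≤ c ^ (3 * 2 ^ (r - 2) - 1) := ha
    _ ≤ c ^ r := pow_le_pow_of_le_one hc0.le hc1.le hre
  have hhyp : ∀ S : Finset (Fin n), S ⊆ (Finset.univ : Finset (Fin n)) →
      Pfree G φ (Finset.univ : Finset (Fin r)) S → (S.card : ℝ) ≤ a * n := by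
    intro S _ hfree
    apply hα
    intro u hu v hv huv hadj
    exact hfree u hu v hv huv ⟨hadj, Finset.mem_univ _⟩
  obtain ⟨f, _, hf⟩ := key G φ c hc0 hc1 r (Finset.univ : Finset (Fin r))
    (le_of_eq hPcard) Finset.univ_nonempty a ha0 (by rw [hPcard]; exact hac)
    (Finset.univ : Finset (Fin n)) hhyp
  refine ⟨fun i => Finset.univ.filter (fun v => f v = i), ?_, ?_⟩
  · intro v
    refine ⟨f v, by simp, ?_⟩
    intro j hj
    exact ((Finset.mem_filter.mp hj).2).symm
  · intro i S hSC hSfree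
    apply hf i S
    · intro v hv
      exact hSC v hv
    · intro u hu v hv huv hedge
      obtain ⟨hadj, hcol⟩ := hedge
      exact hSfree u hu v hv huv ⟨hadj, Finset.mem_singleton.mp hcol⟩
end

section
/- For every ε > 0 there exist γ > 0 and n_0 such that for every n ≥ n_0 and every simple graph G on n vertices with independence number α(G) ≤ γ·n, the number of 2-edge-colorings of G containing no monochromatic K_3 is at most 2^(ε·n²). -/
open Finset

section Aux

open Finset

variable {n : ℕ}

open Classical in
noncomputable def nbr (G : SimpleGraph (Fin n)) (φ : G.edgeSet → Fin 2)
    (c : Fin 2) (u : Fin n) : Finset (Fin n) :=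
  Finset.univ.filter (fun v => ∃ h : G.Adj u v, φ ⟨s(u, v), h⟩ = c)

lemma mem_nbr {G : SimpleGraph (Fin n)} {φ : G.edgeSet → Fin 2} {c : Fin 2} {u v : Fin n} :
    v ∈ nbr G φ c u ↔ ∃ h : G.Adj u v, φ ⟨s(u, v), h⟩ = c := by
  simp [nbr]

lemma edge_swap {G : SimpleGraph (Fin n)} (φ : G.edgeSet → Fin 2)
    {u v : Fin n} (h : G.Adj u v) : φ ⟨s(v, u), h.symm⟩ = φ ⟨s(u, v), h⟩ := by
  congr 1
  exact Subtype.ext (Sym2.eq_swap)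

lemma mem_nbr_symm {G : SimpleGraph (Fin n)} {φ : G.edgeSet → Fin 2} {c : Fin 2} {u v : Fin n}
    (h : v ∈ nbr G φ c u) : u ∈ nbr G φ c v := by
  rw [mem_nbr] at h ⊢
  obtain ⟨h', e⟩ := h
  exact ⟨h'.symm, by rw [edge_swap φ h']; exact e⟩

lemma fin2cases (a : Fin 2) : a = 0 ∨ a = 1 := by
  fin_cases a <;> simp

lemma mono_of_adj {G : SimpleGraph (Fin n)} {φ : G.edgeSet → Fin 2} {c : Fin 2}
    {u x y : Fin n} (hx : x ∈ nbr G φ c u) (hy : y ∈ nbr G φ c u) (hxy : x ≠ y)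
    (hadj : G.Adj x y) (he : φ ⟨s(x, y), hadj⟩ = c) : HasMonoClique G φ 3 := by
  obtain ⟨hux, -⟩ := mem_nbr.mp hx
  obtain ⟨huy, -⟩ := mem_nbr.mp hy
  have h1 : u ≠ x := hux.ne
  have h2 : u ≠ y := huy.ne
  refine ⟨{u, x, y}, c, ?_, ?_⟩
  · rw [Finset.card_insert_of_notMem (by simp [h1, h2]),
      Finset.card_insert_of_notMem (by simp [hxy]), Finset.card_singleton]
  · have hyx : y ∈ nbr G φ c x := mem_nbr.mpr ⟨hadj, he⟩
    intro a ha b hb hab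
    simp only [Finset.mem_insert, Finset.mem_singleton] at ha hb
    rcases ha with rfl | rfl | rfl <;> rcases hb with rfl | rfl | rfl
    · exact absurd rfl hab
    · exact mem_nbr.mp hx
    · exact mem_nbr.mp hy
    · exact mem_nbr.mp (mem_nbr_symm hx)
    · exact absurd rfl hab
    · exact mem_nbr.mp hyx
    · exact mem_nbr.mp (mem_nbr_symm hy)
    · exact mem_nbr.mp (mem_nbr_symm hyx)
    · exact absurd rfl hab

lemma cross_indep {G : SimpleGraph (Fin n)} {φ : G.edgeSet → Fin 2}
    (hφ : ¬ HasMonoClique G φ 3) (u v : Fin n) :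
    ∀ a ∈ nbr G φ 0 u ∩ nbr G φ 1 v, ∀ b ∈ nbr G φ 0 u ∩ nbr G φ 1 v,
      a ≠ b → ¬ G.Adj a b := by
  intro a ha b hb hab hadj
  rw [Finset.mem_inter] at ha hb
  rcases fin2cases (φ ⟨s(a, b), hadj⟩) with he | he
  · exact hφ (mono_of_adj ha.1 hb.1 hab hadj he)
  · exact hφ (mono_of_adj ha.2 hb.2 hab hadj he)

lemma sum_deg_mul_deg {G : SimpleGraph (Fin n)} {φ : G.edgeSet → Fin 2} {b : ℝ}
    (hφ : ¬ HasMonoClique G φ 3) (hind : indepLE G b) :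
    ∑ w : Fin n, ((nbr G φ 0 w).card * (nbr G φ 1 w).card : ℝ) ≤ (n : ℝ) ^ 2 * b := by
  classical
  have h1 : ∀ w : Fin n, ((nbr G φ 0 w).card * (nbr G φ 1 w).card : ℝ)
      = ∑ u : Fin n, ∑ v : Fin n,
        (if u ∈ nbr G φ 0 w ∧ v ∈ nbr G φ 1 w then (1 : ℝ) else 0) := by
    intro w
    have : ∀ u v : Fin n,
        (if u ∈ nbr G φ 0 w ∧ v ∈ nbr G φ 1 w then (1 : ℝ) else 0)
        = (if u ∈ nbr G φ 0 w then (1 : ℝ) else 0) * (if v ∈ nbr G φ 1 w then (1 : ℝ) else 0) := by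
      intro u v
      by_cases hu : u ∈ nbr G φ 0 w <;> by_cases hv : v ∈ nbr G φ 1 w <;> simp [hu, hv]
    simp_rw [this]
    rw [← Finset.sum_mul_sum]
    simp [Finset.sum_ite_mem, Finset.univ_inter]
  calc ∑ w : Fin n, ((nbr G φ 0 w).card * (nbr G φ 1 w).card : ℝ)
      = ∑ w : Fin n, ∑ u : Fin n, ∑ v : Fin n,
          (if u ∈ nbr G φ 0 w ∧ v ∈ nbr G φ 1 w then (1 : ℝ) else 0) := by
        exact Finset.sum_congr rfl fun w _ => h1 w
    _ = ∑ u : Fin n, ∑ v : Fin n, ∑ w : Fin n,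
          (if u ∈ nbr G φ 0 w ∧ v ∈ nbr G φ 1 w then (1 : ℝ) else 0) := by
        rw [Finset.sum_comm]
        exact Finset.sum_congr rfl fun u _ => Finset.sum_comm
    _ = ∑ u : Fin n, ∑ v : Fin n, ((nbr G φ 0 u ∩ nbr G φ 1 v).card : ℝ) := by
        refine Finset.sum_congr rfl fun u _ => Finset.sum_congr rfl fun v _ => ?_
        have : ∀ w : Fin n, (u ∈ nbr G φ 0 w ∧ v ∈ nbr G φ 1 w)
            ↔ w ∈ nbr G φ 0 u ∩ nbr G φ 1 v := by
          intro w
          rw [Finset.mem_inter]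
          constructor
          · rintro ⟨h1, h2⟩; exact ⟨mem_nbr_symm h1, mem_nbr_symm h2⟩
          · rintro ⟨h1, h2⟩; exact ⟨mem_nbr_symm h1, mem_nbr_symm h2⟩
        simp_rw [this]
        rw [Finset.sum_ite_mem, Finset.univ_inter, Finset.sum_const, nsmul_eq_mul, mul_one]
    _ ≤ ∑ _u : Fin n, ∑ _v : Fin n, b := by
        refine Finset.sum_le_sum fun u _ => Finset.sum_le_sum fun v _ => ?_
        exact hind _ (cross_indep hφ u v)
    _ = (n : ℝ) ^ 2 * b := by
        simp [Finset.sum_const, Finset.card_univ]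
        ring

noncomputable def mins (G : SimpleGraph (Fin n)) (φ : G.edgeSet → Fin 2) (u : Fin n) :
    Finset (Fin n) :=
  if (nbr G φ 1 u).card ≤ (nbr G φ 0 u).card then nbr G φ 1 u else nbr G φ 0 u

noncomputable def maj (G : SimpleGraph (Fin n)) (φ : G.edgeSet → Fin 2) (u : Fin n) : Fin 2 :=
  if (nbr G φ 1 u).card ≤ (nbr G φ 0 u).card then 0 else 1

noncomputable def Mset (G : SimpleGraph (Fin n)) (φ : G.edgeSet → Fin 2) :
    Finset (Fin n × Fin n) :=
  Finset.univ.biUnion (fun u => {u} ×ˢ mins G φ u)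

lemma mem_Mset {G : SimpleGraph (Fin n)} {φ : G.edgeSet → Fin 2} {u v : Fin n} :
    (u, v) ∈ Mset G φ ↔ v ∈ mins G φ u := by
  simp [Mset]

lemma mem_mins_iff {G : SimpleGraph (Fin n)} {φ : G.edgeSet → Fin 2} {u v : Fin n}
    (h : G.Adj u v) :
    v ∈ mins G φ u ↔ φ ⟨s(u, v), h⟩ ≠ maj G φ u := by
  unfold mins maj
  split
  · rw [mem_nbr]
    constructor
    · rintro ⟨h', e⟩
      intro e0
      rw [e0] at e; exact absurd e (by norm_num)
    · intro ne
      rcases fin2cases (φ ⟨s(u, v), h⟩) with e | e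
      · exact absurd e ne
      · exact ⟨h, e⟩
  · rw [mem_nbr]
    constructor
    · rintro ⟨h', e⟩
      intro e0
      rw [e0] at e; exact absurd e (by norm_num)
    · intro ne
      rcases fin2cases (φ ⟨s(u, v), h⟩) with e | e
      · exact ⟨h, e⟩
      · exact absurd e ne

lemma coloring_eq {G : SimpleGraph (Fin n)} {φ φ' : G.edgeSet → Fin 2}
    (hmaj : maj G φ = maj G φ') (hM : Mset G φ = Mset G φ') : φ = φ' := by
  funext e
  obtain ⟨q, hq⟩ := e
  revert hq
  induction q using Sym2.inductionOn with
  | hf u v =>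
    intro hq
    have hadj : G.Adj u v := hq
    have h1 := (mem_mins_iff (φ := φ) hadj).symm
    have h2 := (mem_mins_iff (φ := φ') hadj).symm
    have hiff : (φ ⟨s(u, v), hq⟩ ≠ maj G φ u) ↔ (φ' ⟨s(u, v), hq⟩ ≠ maj G φ u) := by
      rw [h1, ← mem_Mset, hM, mem_Mset, mem_mins_iff hadj, ← hmaj]
    rcases fin2cases (φ ⟨s(u, v), hq⟩) with ea | ea <;>
      rcases fin2cases (φ' ⟨s(u, v), hq⟩) with eb | eb <;>
      rcases fin2cases (maj G φ u) with ec | ec <;>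
      rw [ea, eb] <;> rw [ea, eb, ec] at hiff <;> simp_all

lemma card_mins_sq_le {G : SimpleGraph (Fin n)} (φ : G.edgeSet → Fin 2) (u : Fin n) :
    (mins G φ u).card ^ 2 ≤ (nbr G φ 0 u).card * (nbr G φ 1 u).card := by
  unfold mins
  split
  · rename_i hle
    rw [pow_two]
    exact Nat.mul_le_mul_right _ hle
  · rename_i hlt
    rw [pow_two]
    exact Nat.mul_le_mul_left _ (le_of_not_ge hlt)

lemma card_Mset_le {G : SimpleGraph (Fin n)} (φ : G.edgeSet → Fin 2) :
    (Mset G φ).card ≤ ∑ u : Fin n, (mins G φ u).card := by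
  refine (Finset.card_biUnion_le).trans ?_
  refine Finset.sum_le_sum fun u _ => ?_
  simp [Finset.card_product]

lemma numColorings_le_count (G : SimpleGraph (Fin n)) (m : ℕ)
    (h : ∀ φ : G.edgeSet → Fin 2, ¬ HasMonoClique G φ 3 → (Mset G φ).card ≤ m) :
    numColorings G 2 3 ≤ 2 ^ n * ∑ i ∈ Finset.range (m + 1), (n * n).choose i := by
  classical
  have hinj : numColorings G 2 3
      ≤ Nat.card ((Fin n → Fin 2) × {M : Finset (Fin n × Fin n) // M.card ≤ m}) := by
    refine Nat.card_le_card_of_injective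
      (fun ψ : {φ : G.edgeSet → Fin 2 // ¬ HasMonoClique G φ 3} =>
        ((maj G ψ.1, ⟨Mset G ψ.1, h ψ.1 ψ.2⟩) :
          (Fin n → Fin 2) × {M : Finset (Fin n × Fin n) // M.card ≤ m})) ?_
    intro ψ ψ' he
    simp only [Prod.mk.injEq, Subtype.mk.injEq] at he
    exact Subtype.ext (coloring_eq he.1 he.2)
  refine hinj.trans ?_
  rw [Nat.card_eq_fintype_card, Fintype.card_prod]
  have hc1 : Fintype.card (Fin n → Fin 2) = 2 ^ n := by simp
  have hc2 : Fintype.card {M : Finset (Fin n × Fin n) // M.card ≤ m}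
      ≤ ∑ i ∈ Finset.range (m + 1), (n * n).choose i := by
    rw [Fintype.card_subtype]
    have hsub : (Finset.univ.filter fun M : Finset (Fin n × Fin n) => M.card ≤ m)
        ⊆ (Finset.range (m + 1)).biUnion
            (fun i => Finset.powersetCard i (Finset.univ : Finset (Fin n × Fin n))) := by
      intro M hM
      rw [Finset.mem_filter] at hM
      rw [Finset.mem_biUnion]
      exact ⟨M.card, Finset.mem_range.mpr (Nat.lt_succ_of_le hM.2),
        Finset.mem_powersetCard.mpr ⟨Finset.subset_univ M, rfl⟩⟩
    refine (Finset.card_le_card hsub).trans ?_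
    refine (Finset.card_biUnion_le).trans ?_
    refine Finset.sum_le_sum fun i _ => ?_
    rw [Finset.card_powersetCard]
    simp [Finset.card_univ]
  rw [hc1]
  exact Nat.mul_le_mul_left _ hc2

end Aux
set_option maxHeartbeats 1000000 in
theorem statement_1 (ε : ℝ) (hε : 0 < ε) :
    ∃ γ : ℝ, 0 < γ ∧ ∃ n0 : ℕ, ∀ n : ℕ, n0 ≤ n → ∀ G : SimpleGraph (Fin n),
      indepLE G (γ * n) →
      (numColorings G 2 3 : ℝ) ≤ (2 : ℝ) ^ (ε * (n : ℝ) ^ 2) := by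
  classical
  obtain ⟨K, hK⟩ : ∃ K : ℕ, ((1 : ℝ) / 2) ^ K < ε / 8 :=
    exists_pow_lt_of_lt_one (by positivity) (by norm_num)
  set x : ℝ := ((1 : ℝ) / 2) ^ K with hxdef
  have hx0 : 0 < x := by positivity
  have hx1 : x ≤ 1 := pow_le_one₀ (by norm_num) (by norm_num)
  have hxinv : x⁻¹ = (2 : ℝ) ^ K := by
    rw [hxdef, ← inv_pow]
    norm_num
  refine ⟨x ^ 4, by positivity, max 1 ⌈(4 : ℝ) / ε⌉₊, ?_⟩
  intro n hn G hind
  set m : ℕ := ⌊x ^ 2 * (n : ℝ) ^ 2⌋₊ with hmdef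
  -- Step 1 : every good coloring has a small minority set
  have hcard : ∀ φ : G.edgeSet → Fin 2, ¬ HasMonoClique G φ 3 → (Mset G φ).card ≤ m := by
    intro φ hφ
    have hsum : ∑ w : Fin n, ((nbr G φ 0 w).card * (nbr G φ 1 w).card : ℝ)
        ≤ (n : ℝ) ^ 2 * (x ^ 4 * n) := sum_deg_mul_deg hφ hind
    have hCS : (∑ w : Fin n, ((mins G φ w).card : ℝ)) ^ 2
        ≤ (n : ℝ) * ∑ w : Fin n, ((mins G φ w).card : ℝ) ^ 2 := by
      have := sq_sum_le_card_mul_sum_sq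
        (s := (Finset.univ : Finset (Fin n))) (f := fun w => ((mins G φ w).card : ℝ))
      simpa [Finset.card_univ] using this
    have hsq : ∀ w : Fin n, ((mins G φ w).card : ℝ) ^ 2
        ≤ ((nbr G φ 0 w).card * (nbr G φ 1 w).card : ℝ) := by
      intro w
      exact_mod_cast Nat.cast_le.mpr (card_mins_sq_le φ w) |>.trans_eq (by push_cast; ring)
    have h2 : (∑ w : Fin n, ((mins G φ w).card : ℝ)) ^ 2 ≤ (x ^ 2 * (n : ℝ) ^ 2) ^ 2 := by
      calc (∑ w : Fin n, ((mins G φ w).card : ℝ)) ^ 2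
          ≤ (n : ℝ) * ∑ w : Fin n, ((mins G φ w).card : ℝ) ^ 2 := hCS
        _ ≤ (n : ℝ) * ∑ w : Fin n, ((nbr G φ 0 w).card * (nbr G φ 1 w).card : ℝ) := by
            have hsum2 : ∑ w : Fin n, ((mins G φ w).card : ℝ) ^ 2
                ≤ ∑ w : Fin n, ((nbr G φ 0 w).card * (nbr G φ 1 w).card : ℝ) :=
              Finset.sum_le_sum (fun w _ => hsq w)
            exact mul_le_mul_of_nonneg_left hsum2 (Nat.cast_nonneg n)
        _ ≤ (n : ℝ) * ((n : ℝ) ^ 2 * (x ^ 4 * n)) :=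
            mul_le_mul_of_nonneg_left hsum (Nat.cast_nonneg n)
        _ = (x ^ 2 * (n : ℝ) ^ 2) ^ 2 := by ring
    have h3 : (∑ w : Fin n, ((mins G φ w).card : ℝ)) ≤ x ^ 2 * (n : ℝ) ^ 2 := by
      have hs0 : (0 : ℝ) ≤ ∑ w : Fin n, ((mins G φ w).card : ℝ) :=
        Finset.sum_nonneg fun w _ => Nat.cast_nonneg _
      have hb0 : (0 : ℝ) ≤ x ^ 2 * (n : ℝ) ^ 2 := by positivity
      nlinarith [h2, hs0, hb0]
    have h4 : ((Mset G φ).card : ℝ) ≤ x ^ 2 * (n : ℝ) ^ 2 := by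
      refine le_trans ?_ h3
      exact_mod_cast Nat.cast_le.mpr (card_Mset_le φ) |>.trans_eq (by push_cast; rfl)
    exact Nat.le_floor h4
  -- Step 2 : counting
  have hcount := numColorings_le_count G m hcard
  -- Step 3 : real estimates
  set N : ℕ := n * n with hNdef
  have hn1 : (1 : ℝ) ≤ (n : ℝ) := by
    have := le_max_left 1 ⌈(4 : ℝ) / ε⌉₊
    exact_mod_cast Nat.one_le_cast.mpr (le_trans this hn)
  have hn4 : (4 : ℝ) / ε ≤ (n : ℝ) := by
    have h1 : ⌈(4 : ℝ) / ε⌉₊ ≤ n := le_trans (le_max_right _ _) hn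
    exact le_trans (Nat.le_ceil _) (by exact_mod_cast h1)
  have hmle : (m : ℝ) ≤ x ^ 2 * (n : ℝ) ^ 2 := Nat.floor_le (by positivity)
  have hNcast : ((N : ℕ) : ℝ) = (n : ℝ) ^ 2 := by rw [hNdef]; push_cast; ring
  have hmN : m ≤ N := by
    have hx2 : x ^ 2 ≤ 1 := pow_le_one₀ hx0.le hx1
    have : (m : ℝ) ≤ (N : ℝ) := by
      refine hmle.trans ?_
      rw [hNcast]
      nlinarith [sq_nonneg (n : ℝ)]
    exact_mod_cast this
  -- binomial tail bound
  have hb1 : x ^ m * ∑ i ∈ Finset.range (m + 1), (N.choose i : ℝ) ≤ (1 + x) ^ N := by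
    rw [Finset.mul_sum]
    calc ∑ i ∈ Finset.range (m + 1), x ^ m * (N.choose i : ℝ)
        ≤ ∑ i ∈ Finset.range (m + 1), (N.choose i : ℝ) * x ^ i := by
          refine Finset.sum_le_sum fun i hi => ?_
          rw [mul_comm]
          refine mul_le_mul_of_nonneg_left ?_ (Nat.cast_nonneg _)
          exact pow_le_pow_of_le_one hx0.le hx1 (Nat.lt_succ_iff.mp (Finset.mem_range.mp hi))
      _ ≤ ∑ i ∈ Finset.range (N + 1), (N.choose i : ℝ) * x ^ i := by
          refine Finset.sum_le_sum_of_subset_of_nonneg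
            (Finset.range_subset_range.mpr (by omega)) fun i _ _ => by positivity
      _ = (1 + x) ^ N := by
          rw [add_comm 1 x, add_pow]
          refine Finset.sum_congr rfl fun i _ => ?_
          rw [one_pow]
          ring
  have hS : (∑ i ∈ Finset.range (m + 1), (N.choose i : ℝ)) ≤ (1 + x) ^ N * (x⁻¹) ^ m := by
    have hxm : (0 : ℝ) < x ^ m := pow_pos hx0 m
    rw [inv_pow, ← div_eq_mul_inv, le_div_iff₀ hxm]
    linarith [hb1, mul_comm (x ^ m) (∑ i ∈ Finset.range (m + 1), (N.choose i : ℝ))]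
  -- assemble
  have hc : (numColorings G 2 3 : ℝ)
      ≤ (2 : ℝ) ^ n * ∑ i ∈ Finset.range (m + 1), (N.choose i : ℝ) := by
    have := (Nat.cast_le (α := ℝ)).mpr hcount
    push_cast at this
    exact this
  have he2 : (2 : ℝ) ≤ Real.exp 1 := by
    have := Real.add_one_le_exp (1 : ℝ)
    linarith
  have hexp1 : (2 : ℝ) ^ n ≤ Real.exp n := by
    calc (2 : ℝ) ^ n ≤ (Real.exp 1) ^ n := pow_le_pow_left₀ (by norm_num) he2 n
      _ = Real.exp n := Real.exp_one_pow n
  have hexp2 : (1 + x) ^ N ≤ Real.exp ((N : ℝ) * x) := by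
    calc (1 + x) ^ N ≤ (Real.exp x) ^ N := by
          refine pow_le_pow_left₀ (by positivity) ?_ N
          linarith [Real.add_one_le_exp x]
      _ = Real.exp ((N : ℝ) * x) := (Real.exp_nat_mul x N).symm
  have hexp3 : (x⁻¹) ^ m ≤ Real.exp ((K : ℝ) * m) := by
    rw [hxinv, ← pow_mul]
    calc (2 : ℝ) ^ (K * m) ≤ (Real.exp 1) ^ (K * m) := pow_le_pow_left₀ (by norm_num) he2 _
      _ = Real.exp ((K * m : ℕ)) := Real.exp_one_pow _
      _ = Real.exp ((K : ℝ) * m) := by push_cast; ring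
  -- numeric exponent bound
  have hKx : (K : ℝ) * x ^ 2 ≤ x := by
    have hK2 : (K : ℝ) ≤ (2 : ℝ) ^ K := by
      exact_mod_cast (Nat.lt_two_pow_self (n := K)).le
    have h1 : (K : ℝ) * x ^ 2 ≤ (2 : ℝ) ^ K * x ^ 2 :=
      mul_le_mul_of_nonneg_right hK2 (by positivity)
    have h2 : (2 : ℝ) ^ K * x ^ 2 = x := by
      rw [hxdef, pow_two, ← mul_assoc, ← mul_pow]
      norm_num
    linarith
  have hexpo : (n : ℝ) + (N : ℝ) * x + (K : ℝ) * m ≤ Real.log 2 * (ε * (n : ℝ) ^ 2) := by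
    have hxε : x < ε / 8 := hK
    have hKm : (K : ℝ) * m ≤ x * (n : ℝ) ^ 2 := by
      calc (K : ℝ) * m ≤ (K : ℝ) * (x ^ 2 * (n : ℝ) ^ 2) :=
            mul_le_mul_of_nonneg_left hmle (Nat.cast_nonneg K)
        _ = ((K : ℝ) * x ^ 2) * (n : ℝ) ^ 2 := by ring
        _ ≤ x * (n : ℝ) ^ 2 := mul_le_mul_of_nonneg_right hKx (by positivity)
    have hnn : (n : ℝ) ≤ ε / 4 * (n : ℝ) ^ 2 := by
      have h4 : 4 ≤ ε * (n : ℝ) := by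
        rw [div_le_iff₀ hε] at hn4
        linarith
      nlinarith [hn1]
    have hNx : (N : ℝ) * x ≤ ε / 8 * (n : ℝ) ^ 2 := by
      rw [hNcast]
      have := mul_le_mul_of_nonneg_left hxε.le (sq_nonneg (n : ℝ))
      linarith
    have hlog : (1 : ℝ) / 2 ≤ Real.log 2 := by
      have := Real.log_two_gt_d9
      linarith
    have hKm' : (K : ℝ) * m ≤ ε / 8 * (n : ℝ) ^ 2 := by
      refine hKm.trans ?_
      have := mul_le_mul_of_nonneg_right hxε.le (sq_nonneg (n : ℝ))
      linarith
    have hsum : (n : ℝ) + (N : ℝ) * x + (K : ℝ) * m ≤ ε / 2 * (n : ℝ) ^ 2 := by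
      linarith
    refine hsum.trans ?_
    have hεn : 0 ≤ ε * (n : ℝ) ^ 2 := by positivity
    nlinarith [hlog, hεn]
  calc (numColorings G 2 3 : ℝ)
      ≤ (2 : ℝ) ^ n * ∑ i ∈ Finset.range (m + 1), (N.choose i : ℝ) := hc
    _ ≤ (2 : ℝ) ^ n * ((1 + x) ^ N * (x⁻¹) ^ m) := by
        refine mul_le_mul_of_nonneg_left hS (by positivity)
    _ ≤ Real.exp n * (Real.exp ((N : ℝ) * x) * Real.exp ((K : ℝ) * m)) := by
        refine mul_le_mul ?_ ?_ (by positivity) (by positivity)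
        · exact hexp1
        · exact mul_le_mul hexp2 hexp3 (by positivity) (by positivity)
    _ = Real.exp ((n : ℝ) + (N : ℝ) * x + (K : ℝ) * m) := by
        rw [← Real.exp_add, ← Real.exp_add]
        ring_nf
    _ ≤ Real.exp (Real.log 2 * (ε * (n : ℝ) ^ 2)) := Real.exp_le_exp.mpr hexpo
    _ = (2 : ℝ) ^ (ε * (n : ℝ) ^ 2) := (Real.rpow_def_of_pos (by norm_num) _).symm
end

section
/- For every γ > 0 there exists n_0 such that for every n ≥ n_0 there exists a simple graph G on n vertices with independence number α(G) ≤ γ·n for which the number of 2-edge-colorings of G containing no monochromatic K_4 is at least 2^(⌊n²/4⌋). -/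
open Finset

lemma count_pi_ne (m k : ℕ) (z : Fin k) (P : Finset (Fin m × Fin m)) :
    (Finset.univ.filter fun ω : Fin m × Fin m → Fin k => ∀ p ∈ P, ω p ≠ z).card
      = (k-1)^P.card * k^(m*m - P.card) := by
  classical
  have : (Finset.univ.filter fun ω : Fin m × Fin m → Fin k => ∀ p ∈ P, ω p ≠ z)
      = Fintype.piFinset (fun p => if p ∈ P then (Finset.univ : Finset (Fin k)).erase z else Finset.univ) := by
    ext ω
    simp only [mem_filter, mem_univ, true_and, Fintype.mem_piFinset]
    constructor
    · intro h p
      split_ifs with hp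
      · simp [h p hp]
      · simp
    · intro h p hp
      have := h p
      simp [hp] at this
      exact this
  rw [this, Fintype.card_piFinset]
  have h1 : ∀ p : Fin m × Fin m,
      (if p ∈ P then (Finset.univ : Finset (Fin k)).erase z else Finset.univ).card
      = if p ∈ P then k - 1 else k := by
    intro p; split_ifs with hp
    · rw [Finset.card_erase_of_mem (mem_univ _), Finset.card_univ, Fintype.card_fin]
    · rw [Finset.card_univ, Fintype.card_fin]
  simp only [h1]
  rw [Finset.prod_ite (fun _ => k-1) (fun _ => k), Finset.prod_const, Finset.prod_const]
  congr 1
  · congr 1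
    rw [Finset.filter_mem_eq_inter, Finset.univ_inter]
  · congr 1
    rw [Finset.filter_not, Finset.filter_mem_eq_inter, Finset.univ_inter, Finset.card_sdiff_of_subset (subset_univ _),
      Finset.card_univ]
    congr 1
    simp [Fintype.card_prod]

lemma count_pi_eq (m k : ℕ) (z : Fin k) (P : Finset (Fin m × Fin m)) :
    (Finset.univ.filter fun ω : Fin m × Fin m → Fin k => ∀ p ∈ P, ω p = z).card
      = k^(m*m - P.card) := by
  classical
  have : (Finset.univ.filter fun ω : Fin m × Fin m → Fin k => ∀ p ∈ P, ω p = z)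
      = Fintype.piFinset (fun p => if p ∈ P then ({z} : Finset (Fin k)) else Finset.univ) := by
    ext ω
    simp only [mem_filter, mem_univ, true_and, Fintype.mem_piFinset]
    constructor
    · intro h p
      split_ifs with hp
      · simp [h p hp]
      · simp
    · intro h p hp
      have := h p
      simp [hp] at this
      exact this
  rw [this, Fintype.card_piFinset]
  have h1 : ∀ p : Fin m × Fin m,
      (if p ∈ P then ({z} : Finset (Fin k)) else Finset.univ).card
      = if p ∈ P then 1 else k := by
    intro p; split_ifs with hp
    · simp
    · rw [Finset.card_univ, Fintype.card_fin]
  simp only [h1]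
  rw [Finset.prod_ite (fun _ => 1) (fun _ => k), Finset.prod_const, Finset.prod_const, one_pow, one_mul]
  congr 1
  rw [Finset.filter_not, Finset.filter_mem_eq_inter, Finset.univ_inter, Finset.card_sdiff_of_subset (subset_univ _),
    Finset.card_univ]
  congr 1
  simp [Fintype.card_prod]


lemma lt_pairs_card {m : ℕ} (S : Finset (Fin m)) :
    2 * ((S ×ˢ S).filter fun p => p.1 < p.2).card = S.card * S.card - S.card := by
  classical
  have hswap : ((S ×ˢ S).filter fun p => p.1 < p.2).card
      = ((S ×ˢ S).filter fun p => p.2 < p.1).card := by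
    apply Finset.card_bij' (fun p _ => Prod.swap p) (fun p _ => Prod.swap p)
    · intro a ha; simp only [mem_filter, Finset.mem_product] at ha ⊢
      exact ⟨⟨ha.1.2, ha.1.1⟩, ha.2⟩
    · intro a ha; simp only [mem_filter, Finset.mem_product] at ha ⊢
      exact ⟨⟨ha.1.2, ha.1.1⟩, ha.2⟩
    · intro a _; simp
    · intro a _; simp
  have hunion : ((S ×ˢ S).filter fun p => p.1 < p.2) ∪ ((S ×ˢ S).filter fun p => p.2 < p.1)
      = S.offDiag := by
    ext p
    simp only [Finset.mem_union, mem_filter, Finset.mem_product, Finset.mem_offDiag]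
    constructor
    · rintro (⟨⟨h1, h2⟩, h3⟩ | ⟨⟨h1, h2⟩, h3⟩)
      · exact ⟨h1, h2, ne_of_lt h3⟩
      · exact ⟨h1, h2, (ne_of_lt h3).symm⟩
    · rintro ⟨h1, h2, h3⟩
      rcases lt_or_gt_of_ne h3 with h | h
      · exact Or.inl ⟨⟨h1, h2⟩, h⟩
      · exact Or.inr ⟨⟨h1, h2⟩, h⟩
  have hdisj : Disjoint ((S ×ˢ S).filter fun p => p.1 < p.2)
      ((S ×ˢ S).filter fun p => p.2 < p.1) := by
    rw [Finset.disjoint_left]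
    intro p hp hp'
    simp only [mem_filter] at hp hp'
    exact absurd hp'.2 (not_lt.mpr hp.2.le)
  have := Finset.card_union_of_disjoint hdisj
  rw [hunion, Finset.offDiag_card] at this
  omega

set_option maxHeartbeats 1000000 in
/-- deletion-method Ramsey lemma -/
lemma ramsey (q : ℕ) (hq : 1 ≤ q) : ∃ M : ℕ, 1 ≤ M ∧ ∀ m, M ≤ m →
    ∃ H : SimpleGraph (Fin m), H.CliqueFree 3 ∧
      ∀ S : Finset (Fin m), (∀ u ∈ S, ∀ v ∈ S, u ≠ v → ¬ H.Adj u v) → S.card * q ≤ m := by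
  classical
  refine ⟨2^100 * q^8, by have := Nat.one_le_pow 8 q hq; nlinarith, ?_⟩
  intro m hm
  set k := m / (2^20 * q^2) with hk_def
  set t := m / (2^7 * q) with ht_def
  have hq2 : 1 ≤ q^2 := Nat.one_le_pow _ _ hq
  have hq8 : q^2 ≤ q^8 := Nat.pow_le_pow_right hq (by norm_num)
  have hq18 : q ≤ q^8 := le_trans (Nat.le_self_pow (by norm_num) q) hq8
  have hmbig : 2^100 * q^8 ≤ m := hm
  have hm2 : 2 ≤ m := le_trans (by nlinarith) hmbig
  -- k, t bounds
  have hk2 : 2 ≤ k := by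
    rw [hk_def, Nat.le_div_iff_mul_le (by positivity)]
    nlinarith
  have ht2 : 2 ≤ t := by
    rw [ht_def, Nat.le_div_iff_mul_le (by positivity)]
    nlinarith
  have hkm : k * (2^20 * q^2) ≤ m := Nat.div_mul_le_self _ _
  have htm : t * (2^7 * q) ≤ m := Nat.div_mul_le_self _ _
  have hmk : m ≤ 2^21 * q^2 * k := by
    have h1 := Nat.div_add_mod m (2^20 * q^2)
    have h2 : m % (2^20 * q^2) < 2^20 * q^2 := Nat.mod_lt m (by nlinarith)
    rw [← hk_def] at h1
    have h4 : (1:ℕ) * (2^20 * q^2) ≤ k * (2^20 * q^2) := Nat.mul_le_mul_right _ (by omega)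
    calc m = 2^20 * q^2 * k + m % (2^20*q^2) := by omega
      _ ≤ 2^20 * q^2 * k + 2^20 * q^2 := by omega
      _ ≤ 2^21 * q^2 * k := by nlinarith [h4]
  have hmt : m ≤ 2^8 * q * t := by
    have h1 := Nat.div_add_mod m (2^7 * q)
    have h2 : m % (2^7 * q) < 2^7 * q := Nat.mod_lt m (by nlinarith)
    rw [← ht_def] at h1
    have h4 : (1:ℕ) * (2^7 * q) ≤ t * (2^7 * q) := Nat.mul_le_mul_right _ (by omega)
    calc m = 2^7 * q * t + m % (2^7*q) := by omega
      _ ≤ 2^7 * q * t + 2^7 * q := by omega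
      _ ≤ 2^8 * q * t := by nlinarith [h4]
  set D := t * (t - 1) / 2 with hD_def
  have htmm : t ≤ m := Nat.div_le_self _ _
  have hDm : D ≤ m * m := by
    have : t * (t-1) ≤ m * m := by
      calc t * (t - 1) ≤ t * t := by exact Nat.mul_le_mul_left _ (by omega)
        _ ≤ m * m := Nat.mul_le_mul htmm htmm
    omega
  set z : Fin k := ⟨0, by omega⟩ with hz_def
  -- the random graph
  set Gr : (Fin m × Fin m → Fin k) → SimpleGraph (Fin m) := fun ω =>
    { Adj := fun u v => u ≠ v ∧ ω (u ⊓ v, u ⊔ v) = z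
      symm := by
        refine ⟨?_⟩
        intro u v hv
        exact ⟨hv.1.symm, by rw [inf_comm, sup_comm]; exact hv.2⟩
      loopless := ⟨fun v h => h.1 rfl⟩ } with hGr_def
  have hGrAdj : ∀ ω u v, (Gr ω).Adj u v ↔ u ≠ v ∧ ω (u ⊓ v, u ⊔ v) = z := fun _ _ _ => Iff.rfl
  set Ω : Finset (Fin m × Fin m → Fin k) := Finset.univ with hΩ_def
  have hΩcard : Ω.card = k ^ (m * m) := by
    rw [hΩ_def, Finset.card_univ]
    rw [Fintype.card_fun, Fintype.card_fin, Fintype.card_prod, Fintype.card_fin]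
  set triSet : (Fin m × Fin m → Fin k) → Finset (Fin m × Fin m × Fin m) := fun ω =>
    Finset.univ.filter fun x => x.1 < x.2.1 ∧ x.2.1 < x.2.2 ∧ (Gr ω).Adj x.1 x.2.1 ∧
      (Gr ω).Adj x.2.1 x.2.2 ∧ (Gr ω).Adj x.1 x.2.2 with htriSet_def
  set bad1 : Finset (Fin m × Fin m → Fin k) := Ω.filter fun ω =>
    ∃ S ∈ Finset.powersetCard t (Finset.univ : Finset (Fin m)),
      ∀ u ∈ S, ∀ v ∈ S, u ≠ v → ¬ (Gr ω).Adj u v with hbad1_def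
  set bad2 : Finset (Fin m × Fin m → Fin k) := Ω.filter fun ω => t ≤ (triSet ω).card with hbad2_def
  -- counting bad1
  have hbad1card : bad1.card ≤ m.choose t * ((k-1)^D * k^(m*m - D)) := by
    have hsub : bad1 ⊆ (Finset.powersetCard t (Finset.univ : Finset (Fin m))).biUnion
        (fun S => Ω.filter fun ω => ∀ u ∈ S, ∀ v ∈ S, u ≠ v → ¬ (Gr ω).Adj u v) := by
      intro ω hω
      rw [hbad1_def, mem_filter] at hω
      obtain ⟨_, S, hS, hind⟩ := hω
      exact Finset.mem_biUnion.mpr ⟨S, hS, mem_filter.mpr ⟨mem_univ _, hind⟩⟩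
    refine le_trans (Finset.card_le_card hsub) (le_trans (Finset.card_biUnion_le) ?_)
    have hone : ∀ S ∈ Finset.powersetCard t (Finset.univ : Finset (Fin m)),
        (Ω.filter fun ω => ∀ u ∈ S, ∀ v ∈ S, u ≠ v → ¬ (Gr ω).Adj u v).card
          = (k-1)^D * k^(m*m - D) := by
      intro S hS
      have hScard : S.card = t := (Finset.mem_powersetCard.mp hS).2
      have hfe : (Ω.filter fun ω => ∀ u ∈ S, ∀ v ∈ S, u ≠ v → ¬ (Gr ω).Adj u v)
          = (Ω.filter fun ω => ∀ p ∈ ((S ×ˢ S).filter fun p => p.1 < p.2), ω p ≠ z) := by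
        apply Finset.filter_congr
        intro ω _
        constructor
        · intro h p hp
          rw [mem_filter, Finset.mem_product] at hp
          obtain ⟨⟨h1, h2⟩, h3⟩ := hp
          intro heq
          exact h p.1 h1 p.2 h2 (ne_of_lt h3)
            ⟨ne_of_lt h3, by rwa [inf_eq_left.mpr h3.le, sup_eq_right.mpr h3.le]⟩
        · intro h u hu v hv huv hadj
          rcases lt_or_gt_of_ne huv with hlt | hlt
          · refine h (u, v) (mem_filter.mpr ⟨Finset.mem_product.mpr ⟨hu, hv⟩, hlt⟩) ?_
            have h2 := hadj.2
            rwa [inf_eq_left.mpr hlt.le, sup_eq_right.mpr hlt.le] at h2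
          · refine h (v, u) (mem_filter.mpr ⟨Finset.mem_product.mpr ⟨hv, hu⟩, hlt⟩) ?_
            have h2 := hadj.2
            rwa [inf_eq_right.mpr hlt.le, sup_eq_left.mpr hlt.le] at h2
      rw [hfe]
      have hPcard : ((S ×ˢ S).filter fun p => p.1 < p.2).card = D := by
        have h2 := lt_pairs_card S
        rw [hScard] at h2
        have h3 : t * (t - 1) = t * t - t := by
          rw [Nat.mul_sub, mul_one]
        rw [hD_def]
        omega
      rw [hΩ_def]
      rw [count_pi_ne m k z]
      rw [hPcard]
    rw [Finset.sum_congr rfl hone, Finset.sum_const, Finset.card_powersetCard, Finset.card_univ,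
      Fintype.card_fin, smul_eq_mul]
  -- counting bad2
  have hbad2card : bad2.card * t ≤ m*m*m * k^(m*m - 3) := by
    have hmarkov : bad2.card * t ≤ ∑ ω ∈ Ω, (triSet ω).card := by
      have h1 : bad2.card • t ≤ ∑ ω ∈ bad2, (triSet ω).card :=
        Finset.card_nsmul_le_sum bad2 _ t (fun ω hω => (mem_filter.mp hω).2)
      rw [smul_eq_mul] at h1
      exact le_trans h1 (Finset.sum_le_sum_of_subset (filter_subset _ _))
    refine le_trans hmarkov ?_
    have hswap : ∑ ω ∈ Ω, (triSet ω).card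
        = ∑ x ∈ (Finset.univ : Finset (Fin m × Fin m × Fin m)), (Ω.filter fun ω =>
            x.1 < x.2.1 ∧ x.2.1 < x.2.2 ∧ (Gr ω).Adj x.1 x.2.1 ∧
            (Gr ω).Adj x.2.1 x.2.2 ∧ (Gr ω).Adj x.1 x.2.2).card := by
      rw [htriSet_def]
      simp_rw [Finset.card_filter]
      exact Finset.sum_comm
    rw [hswap]
    have hbound : ∀ x ∈ (Finset.univ : Finset (Fin m × Fin m × Fin m)), (Ω.filter fun ω =>
            x.1 < x.2.1 ∧ x.2.1 < x.2.2 ∧ (Gr ω).Adj x.1 x.2.1 ∧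
            (Gr ω).Adj x.2.1 x.2.2 ∧ (Gr ω).Adj x.1 x.2.2).card ≤ k^(m*m-3) := by
      intro x _
      by_cases hx : x.1 < x.2.1 ∧ x.2.1 < x.2.2
      · set P : Finset (Fin m × Fin m) := {(x.1, x.2.1), (x.2.1, x.2.2), (x.1, x.2.2)} with hP_def
        have hsub2 : (Ω.filter fun ω =>
              x.1 < x.2.1 ∧ x.2.1 < x.2.2 ∧ (Gr ω).Adj x.1 x.2.1 ∧
              (Gr ω).Adj x.2.1 x.2.2 ∧ (Gr ω).Adj x.1 x.2.2)
            ⊆ Ω.filter (fun ω => ∀ p ∈ P, ω p = z) := by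
          intro ω hω
          rw [mem_filter] at hω ⊢
          obtain ⟨hωΩ, h1, h2, h3, h4, h5⟩ := hω
          refine ⟨hωΩ, ?_⟩
          intro p hp
          rw [hP_def] at hp
          simp only [Finset.mem_insert, Finset.mem_singleton] at hp
          rcases hp with rfl | rfl | rfl
          · have h6 := h3.2; rwa [inf_eq_left.mpr h1.le, sup_eq_right.mpr h1.le] at h6
          · have h6 := h4.2; rwa [inf_eq_left.mpr h2.le, sup_eq_right.mpr h2.le] at h6
          · have h13 : x.1 < x.2.2 := h1.trans h2
            have h6 := h5.2; rwa [inf_eq_left.mpr h13.le, sup_eq_right.mpr h13.le] at h6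
        have hne1 : x.1 ≠ x.2.1 := ne_of_lt hx.1
        have hne2 : x.2.1 ≠ x.2.2 := ne_of_lt hx.2
        have hPcard3 : P.card = 3 := by
          rw [hP_def]
          rw [Finset.card_insert_of_notMem (by
            simp only [Finset.mem_insert, Finset.mem_singleton, Prod.mk.injEq]
            push_neg
            exact ⟨fun h => absurd h hne1, fun _ => hne2⟩),
            Finset.card_insert_of_notMem (by
            simp only [Finset.mem_singleton, Prod.mk.injEq]
            push_neg
            intro h; exact absurd h.symm hne1), Finset.card_singleton]
        calc _ ≤ (Ω.filter (fun ω => ∀ p ∈ P, ω p = z)).card := Finset.card_le_card hsub2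
          _ = k^(m*m - P.card) := by rw [hΩ_def]; exact count_pi_eq m k z P
          _ = k^(m*m-3) := by rw [hPcard3]
      · rw [Finset.filter_false_of_mem, Finset.card_empty]
        · exact Nat.zero_le _
        · intro ω _
          rintro ⟨h1, h2, -⟩
          exact hx ⟨h1, h2⟩
    calc ∑ x ∈ (Finset.univ : Finset (Fin m × Fin m × Fin m)), (Ω.filter fun ω =>
            x.1 < x.2.1 ∧ x.2.1 < x.2.2 ∧ (Gr ω).Adj x.1 x.2.1 ∧
            (Gr ω).Adj x.2.1 x.2.2 ∧ (Gr ω).Adj x.1 x.2.2).card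
        ≤ (Finset.univ : Finset (Fin m × Fin m × Fin m)).card • k^(m*m-3) :=
          Finset.sum_le_card_nsmul _ _ _ hbound
      _ = m*m*m * k^(m*m-3) := by
          rw [smul_eq_mul, Finset.card_univ]
          simp only [Fintype.card_prod, Fintype.card_fin]
          ring
  -- numeric key 1
  have hchoose : m.choose t ≤ 2^m := by
    have hsum := Nat.sum_range_choose m
    have hmem : t ∈ Finset.range (m+1) := Finset.mem_range.mpr (by omega)
    calc m.choose t ≤ ∑ i ∈ Finset.range (m+1), m.choose i :=
        Finset.single_le_sum (fun i _ => Nat.zero_le _) hmem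
      _ = 2^m := hsum
  set j := D / (k-1) with hj_def
  obtain ⟨l, hl⟩ : ∃ l, k = l + 1 := ⟨k - 1, (Nat.sub_add_cancel (le_trans one_le_two hk2)).symm⟩
  obtain ⟨u, hu⟩ : ∃ u, t = u + 1 := ⟨t - 1, (Nat.sub_add_cancel (le_trans one_le_two ht2)).symm⟩
  have hjm : m + 2 ≤ j := by
    rw [hj_def, Nat.le_div_iff_mul_le (show 0 < k - 1 by omega), hD_def,
      Nat.le_div_iff_mul_le (show (0:ℕ) < 2 by norm_num)]
    have h8 : 8*(m*k) ≤ t*t := by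
      have e1 : (8*(m*k)) * (2^20 * q^2) ≤ 8 * (m * m) := by nlinarith [hkm]
      have e2 : m * m ≤ (2^8*q*t) * (2^8*q*t) := Nat.mul_le_mul hmt hmt
      have e3 : (8:ℕ) * ((2^8*q*t) * (2^8*q*t)) = (t*t) * (2^19 * q^2) := by ring
      have e4 : (t*t) * (2^19*q^2) ≤ (t*t) * (2^20*q^2) := by nlinarith
      refine Nat.le_of_mul_le_mul_right ?_ (show 0 < 2^20*q^2 by nlinarith)
      calc (8*(m*k)) * (2^20*q^2) ≤ 8*(m*m) := e1
        _ ≤ 8 * ((2^8*q*t) * (2^8*q*t)) := by nlinarith [e2]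
        _ = (t*t) * (2^19 * q^2) := e3
        _ ≤ (t*t) * (2^20*q^2) := e4
    rw [hl, hu] at h8 ⊢
    simp only [Nat.add_sub_cancel]
    nlinarith [h8, hm2]
  have hbase : 2 * (k-1)^(k-1) ≤ k^(k-1) := by
    rw [hl, Nat.add_sub_cancel]
    have hl1 : 1 ≤ l := by omega
    have hlR : (0:ℝ) < (l:ℝ) := by exact_mod_cast hl1
    have hreal : (2:ℝ) * (l:ℝ)^l ≤ ((l:ℝ)+1)^l := by
      have h1 : (1:ℝ) + (l:ℝ) * (1/(l:ℝ)) ≤ (1 + 1/(l:ℝ))^l := by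
        exact_mod_cast one_add_mul_le_pow
          (le_trans (by norm_num : (-2:ℝ) ≤ 0) (by positivity)) l
      have h2 : (1:ℝ) + (l:ℝ) * (1/(l:ℝ)) = 2 := by
        rw [mul_one_div, div_self (ne_of_gt hlR)]
        norm_num
      have h3 : ((1:ℝ) + 1/(l:ℝ))^l = ((l:ℝ)+1)^l / (l:ℝ)^l := by
        rw [← div_pow]
        congr 1
        field_simp
      rw [h2, h3] at h1
      have h4 : (0:ℝ) < (l:ℝ)^l := by positivity
      calc (2:ℝ) * (l:ℝ)^l ≤ (((l:ℝ)+1)^l / (l:ℝ)^l) * (l:ℝ)^l := by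
            exact mul_le_mul_of_nonneg_right h1 h4.le
        _ = ((l:ℝ)+1)^l := by field_simp
    have := hreal
    exact_mod_cast (by push_cast; convert this using 2 <;> push_cast <;> ring :
      ((2 * l^l : ℕ) : ℝ) ≤ (((l+1)^l : ℕ) : ℝ)) |> Nat.cast_le.mp
  have hpow : 2^j * (k-1)^D ≤ k^D := by
    have h1 : (2 * (k-1)^(k-1))^j ≤ (k^(k-1))^j := Nat.pow_le_pow_left hbase j
    have hdm := Nat.div_add_mod D (k-1)
    rw [← hj_def] at hdm
    calc 2^j * (k-1)^D = 2^j * (k-1)^((k-1)*j + D%(k-1)) := by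
          conv_lhs => rw [← hdm]
      _ = (2 * (k-1)^(k-1))^j * (k-1)^(D%(k-1)) := by
          rw [pow_add, mul_pow, ← pow_mul]
          ring
      _ ≤ (k^(k-1))^j * k^(D%(k-1)) :=
          Nat.mul_le_mul h1 (Nat.pow_le_pow_left (Nat.sub_le k 1) _)
      _ = k^((k-1)*j + D%(k-1)) := by rw [← pow_mul, ← pow_add]
      _ = k^D := by conv_rhs => rw [← hdm]
  have hkey1 : 4 * bad1.card ≤ k^(m*m) := by
    calc 4 * bad1.card ≤ 4 * (m.choose t * ((k-1)^D * k^(m*m-D))) :=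
        Nat.mul_le_mul_left _ hbad1card
      _ ≤ 4 * (2^m * ((k-1)^D * k^(m*m-D))) := by
          refine Nat.mul_le_mul_left _ (Nat.mul_le_mul_right _ hchoose)
      _ = (2^(m+2) * (k-1)^D) * k^(m*m-D) := by rw [pow_add]; ring
      _ ≤ (2^j * (k-1)^D) * k^(m*m-D) := by
          refine Nat.mul_le_mul_right _ (Nat.mul_le_mul_right _ ?_)
          exact Nat.pow_le_pow_right (by norm_num) hjm
      _ ≤ k^D * k^(m*m-D) := Nat.mul_le_mul_right _ hpow
      _ = k^(m*m) := by rw [← pow_add]; congr 1; omega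
  have hq7 : q^7 ≤ q^8 := Nat.pow_le_pow_right hq (by norm_num)
  have hkey2 : 4 * bad2.card ≤ k^(m*m) := by
    have hm3 : 4*(m*m*m) ≤ t * (k*k*k) := by
      have e1 : m*(m*(m*m)) ≤ (2^8*q*t) * ((2^21*q^2*k)*((2^21*q^2*k)*(2^21*q^2*k))) :=
        Nat.mul_le_mul hmt (Nat.mul_le_mul hmk (Nat.mul_le_mul hmk hmk))
      have e2 : (2^8*q*t) * ((2^21*q^2*k)*((2^21*q^2*k)*(2^21*q^2*k)))
          = (t*(k*k*k)) * (2^71 * q^7) := by ring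
      have e3 : (4*(m*m*m))*(2^71*q^7) ≤ m*(m*(m*m)) := by
        have h5 : 4*(2^71*q^7) ≤ m := by
          calc 4*(2^71*q^7) ≤ 2^100 * q^8 := by nlinarith [hq7]
            _ ≤ m := hmbig
        calc (4*(m*m*m))*(2^71*q^7) = (m*m*m) * (4*(2^71*q^7)) := by ring
          _ ≤ (m*m*m) * m := Nat.mul_le_mul_left _ h5
          _ = m*(m*(m*m)) := by ring
      have e4 := le_trans e3 (le_of_le_of_eq e1 e2)
      exact Nat.le_of_mul_le_mul_right e4 (show 0 < 2^71*q^7 by positivity)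
    have e5 : (4*bad2.card)*t ≤ 4*(m*m*m*k^(m*m-3)) := by
      calc (4*bad2.card)*t = 4*(bad2.card*t) := by ring
        _ ≤ 4*(m*m*m*k^(m*m-3)) := Nat.mul_le_mul_left _ hbad2card
    have e6 : 4*(m*m*m*k^(m*m-3)) ≤ (t*(k*k*k))*k^(m*m-3) := by
      calc 4*(m*m*m*k^(m*m-3)) = (4*(m*m*m))*k^(m*m-3) := by ring
        _ ≤ (t*(k*k*k))*k^(m*m-3) := Nat.mul_le_mul_right _ hm3
    have e7 : (t*(k*k*k))*k^(m*m-3) = k^(m*m)*t := by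
      have h4 : 4 ≤ m*m := Nat.mul_le_mul hm2 hm2
      calc (t*(k*k*k))*k^(m*m-3) = t * (k^3 * k^(m*m-3)) := by ring
        _ = t * k^(3 + (m*m-3)) := by rw [pow_add]
        _ = t * k^(m*m) := by rw [show 3 + (m*m-3) = m*m by omega]
        _ = k^(m*m)*t := by ring
    refine Nat.le_of_mul_le_mul_right ?_ (show 0 < t by omega)
    calc (4*bad2.card)*t ≤ 4*(m*m*m*k^(m*m-3)) := e5
      _ ≤ (t*(k*k*k))*k^(m*m-3) := e6
      _ = k^(m*m)*t := e7
  -- a good ω exists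
  have hgood : ∃ ω, ω ∉ bad1 ∧ ω ∉ bad2 := by
    have hpos : 0 < k^(m*m) := Nat.pow_pos (by omega)
    have hcard : bad1.card + bad2.card < Ω.card := by
      rw [hΩcard]; omega
    have hne : (Ω \ (bad1 ∪ bad2)).Nonempty := by
      have hu2 := Finset.card_union_le bad1 bad2
      have h6 : (bad1 ∪ bad2).card < Ω.card := lt_of_le_of_lt (le_trans hu2 (le_refl _)) hcard
      rw [← Finset.card_pos, Finset.card_sdiff_of_subset (fun x _ => mem_univ x), hΩcard]
      rw [hΩcard] at h6
      omega
    obtain ⟨ω, hω⟩ := hne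
    rw [Finset.mem_sdiff, Finset.mem_union] at hω
    exact ⟨ω, fun h => hω.2 (Or.inl h), fun h => hω.2 (Or.inr h)⟩
  obtain ⟨ω, hω1, hω2⟩ := hgood
  have hnoindep : ∀ S : Finset (Fin m), S.card = t →
      ¬(∀ u ∈ S, ∀ v ∈ S, u ≠ v → ¬ (Gr ω).Adj u v) := by
    intro S hScard hind
    refine hω1 ?_
    rw [hbad1_def, mem_filter]
    exact ⟨mem_univ _, S, Finset.mem_powersetCard.mpr ⟨Finset.subset_univ _, hScard⟩, hind⟩
  have htri : (triSet ω).card < t := by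
    by_contra h
    exact hω2 (by rw [hbad2_def, mem_filter]; exact ⟨mem_univ _, not_lt.mp h⟩)
  -- deletion
  set R : Finset (Fin m × Fin m) := Finset.univ.filter fun p =>
    p.1 < p.2 ∧ (Gr ω).Adj p.1 p.2 ∧ ∃ c, (Gr ω).Adj p.1 c ∧ (Gr ω).Adj p.2 c with hR_def
  refine ⟨{ Adj := fun u v => (Gr ω).Adj u v ∧ (u ⊓ v, u ⊔ v) ∉ R,
            symm := by
              refine ⟨?_⟩
              intro u v h
              refine ⟨(Gr ω).adj_symm h.1, ?_⟩
              rw [inf_comm, sup_comm]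
              exact h.2
            loopless := ⟨fun v h => (Gr ω).loopless.irrefl v h.1⟩ }, ?_, ?_⟩
  · intro S hS
    rw [SimpleGraph.is3Clique_iff] at hS
    obtain ⟨a, b, c, hab, hac, hbc, rfl⟩ := hS
    apply hab.2
    rw [hR_def, mem_filter]
    have hne : a ≠ b := hab.1.1
    rcases lt_or_gt_of_ne hne with h | h
    · rw [inf_eq_left.mpr h.le, sup_eq_right.mpr h.le]
      exact ⟨mem_univ _, h, hab.1, c, hac.1, hbc.1⟩
    · rw [inf_eq_right.mpr h.le, sup_eq_left.mpr h.le]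
      exact ⟨mem_univ _, h, (Gr ω).adj_symm hab.1, c, hbc.1, hac.1⟩
  · intro S hS
    set S' := S \ R.image Prod.snd with hS'_def
    have hS'ind : ∀ u ∈ S', ∀ v ∈ S', u ≠ v → ¬ (Gr ω).Adj u v := by
      intro u hu v hv huv hadj
      have hu' := Finset.mem_sdiff.mp hu
      have hv' := Finset.mem_sdiff.mp hv
      have hnH : ¬ ((Gr ω).Adj u v ∧ (u ⊓ v, u ⊔ v) ∉ R) := hS u hu'.1 v hv'.1 huv
      have hmemR : (u ⊓ v, u ⊔ v) ∈ R := by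
        by_contra h
        exact hnH ⟨hadj, h⟩
      have hsnd : u ⊔ v ∈ R.image Prod.snd := Finset.mem_image.mpr ⟨_, hmemR, rfl⟩
      rcases le_total u v with h | h
      · rw [sup_eq_right.mpr h] at hsnd
        exact hv'.2 hsnd
      · rw [sup_eq_left.mpr h] at hsnd
        exact hu'.2 hsnd
    have hS'card : S'.card ≤ t - 1 := by
      by_contra h
      push_neg at h
      obtain ⟨T, hT, hTcard⟩ := Finset.exists_subset_card_eq (show t ≤ S'.card by omega)
      exact hnoindep T hTcard (fun u hu v hv huv => hS'ind u (hT hu) v (hT hv) huv)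
    have hRcard : R.card ≤ 3 * (triSet ω).card := by
      set w : Fin m × Fin m → Fin m := fun p =>
        if h : ∃ c, (Gr ω).Adj p.1 c ∧ (Gr ω).Adj p.2 c then Classical.choose h else p.1
        with hw_def
      set f : Fin m × Fin m → Fin m × Fin m × Fin m := fun p =>
        if w p < p.1 then (w p, p.1, p.2) else
          if w p < p.2 then (p.1, w p, p.2) else (p.1, p.2, w p) with hf_def
      have hwspec : ∀ p ∈ R, (Gr ω).Adj p.1 (w p) ∧ (Gr ω).Adj p.2 (w p) := by
        intro p hp
        obtain ⟨-, -, -, hex⟩ := mem_filter.mp hp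
        rw [hw_def]
        simp only [dif_pos hex]
        exact Classical.choose_spec hex
      have hmaps : ∀ p ∈ R, f p ∈ triSet ω := by
        intro p hp
        obtain ⟨-, hlt, hadj, -⟩ := mem_filter.mp hp
        obtain ⟨hc1, hc2⟩ := hwspec p hp
        have hne1 : w p ≠ p.1 := fun h => (Gr ω).loopless.irrefl p.1 (h ▸ hc1)
        have hne2 : w p ≠ p.2 := fun h => (Gr ω).loopless.irrefl p.2 (h ▸ hc2)
        rw [htriSet_def, mem_filter]
        refine ⟨mem_univ _, ?_⟩
        rw [hf_def]
        dsimp only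
        split_ifs with h1 h2
        · exact ⟨h1, hlt, (Gr ω).adj_symm hc1, hadj, (Gr ω).adj_symm hc2⟩
        · refine ⟨lt_of_le_of_ne (not_lt.mp h1) (Ne.symm hne1), h2, hc1, (Gr ω).adj_symm hc2, hadj⟩
        · refine ⟨hlt, lt_of_le_of_ne (not_lt.mp h2) (Ne.symm hne2), hadj, hc2, hc1⟩
      have h3fib : ∀ a ∈ R.image f, (R.filter fun x => f x = a).card ≤ 3 := by
        intro a _
        have hsub : R.filter (fun x => f x = a)
            ⊆ {(a.1, a.2.1), (a.1, a.2.2), (a.2.1, a.2.2)} := by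
          intro p hp
          obtain ⟨hpR, hpf⟩ := mem_filter.mp hp
          rw [hf_def] at hpf
          dsimp only at hpf
          simp only [Finset.mem_insert, Finset.mem_singleton]
          split_ifs at hpf with h1 h2
          · right; right
            rw [← hpf]
          · right; left
            rw [← hpf]
          · left
            rw [← hpf]
        calc (R.filter fun x => f x = a).card
            ≤ ({(a.1, a.2.1), (a.1, a.2.2), (a.2.1, a.2.2)} :
                Finset (Fin m × Fin m)).card := Finset.card_le_card hsub
          _ ≤ 3 := by
              refine le_trans (Finset.card_insert_le _ _) ?_
              have h2 := Finset.card_insert_le (a.1, a.2.2)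
                ({(a.2.1, a.2.2)} : Finset (Fin m × Fin m))
              simp only [Finset.card_singleton] at h2
              omega
      calc R.card ≤ 3 * (R.image f).card := Finset.card_le_mul_card_image R 3 h3fib
        _ ≤ 3 * (triSet ω).card := by
            refine Nat.mul_le_mul_left _ (Finset.card_le_card ?_)
            intro y hy
            obtain ⟨p, hp, rfl⟩ := Finset.mem_image.mp hy
            exact hmaps p hp
    have hfinal : S.card ≤ 4 * t := by
      have h1 : S.card ≤ S'.card + (R.image Prod.snd).card :=
        Finset.card_le_card_sdiff_add_card
      have h2 : (R.image Prod.snd).card ≤ R.card := Finset.card_image_le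
      omega
    calc S.card * q ≤ (4*t) * q := Nat.mul_le_mul_right q hfinal
      _ = t * (4 * q) := by ring
      _ ≤ t * (2^7 * q) := Nat.mul_le_mul_left t (Nat.mul_le_mul_right q (by norm_num : (4:ℕ) ≤ 2^7))
      _ ≤ m := htm

/-- the two-sided graph: `H1` on the left `m1` vertices, `H2` on the right `m2`,
complete bipartite in between. -/
def combG {m1 m2 n : ℕ} (hm : m1 + m2 = n) (H1 : SimpleGraph (Fin m1))
    (H2 : SimpleGraph (Fin m2)) : SimpleGraph (Fin n) where
  Adj u v := u ≠ v ∧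
    ((∃ (h : u.1 < m1) (h' : v.1 < m1), H1.Adj ⟨u.1, h⟩ ⟨v.1, h'⟩) ∨
     (∃ (h : m1 ≤ u.1) (h' : m1 ≤ v.1),
        H2.Adj ⟨u.1 - m1, by have := u.2; omega⟩ ⟨v.1 - m1, by have := v.2; omega⟩) ∨
     (u.1 < m1 ∧ m1 ≤ v.1) ∨ (v.1 < m1 ∧ m1 ≤ u.1))
  symm := by
    refine ⟨?_⟩
    rintro u v ⟨hne, h⟩
    refine ⟨hne.symm, ?_⟩
    rcases h with ⟨h, h', ha⟩ | ⟨h, h', ha⟩ | ⟨h, h'⟩ | ⟨h, h'⟩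
    · exact Or.inl ⟨h', h, ha.symm⟩
    · exact Or.inr (Or.inl ⟨h', h, ha.symm⟩)
    · exact Or.inr (Or.inr (Or.inr ⟨h, h'⟩))
    · exact Or.inr (Or.inr (Or.inl ⟨h, h'⟩))
  loopless := ⟨fun u h => h.1 rfl⟩

def combCol {m1 m2 n : ℕ} (hm : m1 + m2 = n) (f : Fin m1 × Fin m2 → Fin 2) :
    Fin n → Fin n → Fin 2 := fun u v =>
  if h : u.1 < m1 then
    (if h' : v.1 < m1 then 0 else f (⟨u.1, h⟩, ⟨v.1 - m1, by have := v.2; omega⟩))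
  else
    (if h' : v.1 < m1 then f (⟨v.1, h'⟩, ⟨u.1 - m1, by have := u.2; omega⟩) else 1)

lemma combCol_symm {m1 m2 n : ℕ} (hm : m1 + m2 = n) (f : Fin m1 × Fin m2 → Fin 2)
    (u v : Fin n) : combCol hm f u v = combCol hm f v u := by
  unfold combCol
  split_ifs <;> rfl

def combColSym {m1 m2 n : ℕ} (hm : m1 + m2 = n) (f : Fin m1 × Fin m2 → Fin 2) :
    Sym2 (Fin n) → Fin 2 :=
  Sym2.lift ⟨combCol hm f, fun u v => combCol_symm hm f u v⟩

lemma combColSym_mk {m1 m2 n : ℕ} (hm : m1 + m2 = n) (f : Fin m1 × Fin m2 → Fin 2)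
    (u v : Fin n) : combColSym hm f s(u, v) = combCol hm f u v :=
  Sym2.lift_mk _ _ _

lemma adj_left {m1 m2 n : ℕ} {hm : m1 + m2 = n} {H1 : SimpleGraph (Fin m1)}
    {H2 : SimpleGraph (Fin m2)} {u v : Fin n} (h : (combG hm H1 H2).Adj u v)
    (hu : u.1 < m1) (hv : v.1 < m1) : H1.Adj ⟨u.1, hu⟩ ⟨v.1, hv⟩ := by
  obtain ⟨hne, ⟨p1, p2, ha⟩ | ⟨p1, -, -⟩ | ⟨-, p2⟩ | ⟨-, p2⟩⟩ := h
  · exact ha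
  · exact absurd hu (not_lt.mpr p1)
  · exact absurd hv (not_lt.mpr p2)
  · exact absurd hu (not_lt.mpr p2)

lemma adj_right {m1 m2 n : ℕ} {hm : m1 + m2 = n} {H1 : SimpleGraph (Fin m1)}
    {H2 : SimpleGraph (Fin m2)} {u v : Fin n} (h : (combG hm H1 H2).Adj u v)
    (hu : m1 ≤ u.1) (hv : m1 ≤ v.1) :
    H2.Adj ⟨u.1 - m1, by have := u.2; omega⟩ ⟨v.1 - m1, by have := v.2; omega⟩ := by
  obtain ⟨hne, ⟨p1, -, -⟩ | ⟨p1, p2, ha⟩ | ⟨p1, -⟩ | ⟨p1, -⟩⟩ := h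
  · exact absurd p1 (not_lt.mpr hu)
  · exact ha
  · exact absurd p1 (not_lt.mpr hu)
  · exact absurd p1 (not_lt.mpr hv)

lemma combCol_good {m1 m2 n : ℕ} (hm : m1 + m2 = n) (H1 : SimpleGraph (Fin m1))
    (H2 : SimpleGraph (Fin m2)) (hf1 : H1.CliqueFree 3) (hf2 : H2.CliqueFree 3)
    (f : Fin m1 × Fin m2 → Fin 2) :
    ¬ HasMonoClique (combG hm H1 H2) (fun e => combColSym hm f e.1) 4 := by
  rintro ⟨S, c, hcard, hprop⟩
  classical
  set SL := S.filter (fun v => v.1 < m1) with hSL_def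
  set SR := S.filter (fun v => ¬ v.1 < m1) with hSR_def
  have hsplit : SL.card + SR.card = 4 := by
    rw [hSL_def, hSR_def, Finset.card_filter_add_card_filter_not, hcard]
  have hc2 : c.1 < 2 := c.2
  rcases (show c = 0 ∨ c = 1 by omega) with rfl | rfl
  · -- color 0 : at most one vertex on the right, 3 on the left → triangle in H1
    have hR1 : SR.card ≤ 1 := by
      rw [Finset.card_le_one]
      intro a ha b hb
      by_contra hne
      obtain ⟨ha', hal⟩ := mem_filter.mp ha
      obtain ⟨hb', hbl⟩ := mem_filter.mp hb
      obtain ⟨hadj, hcol⟩ := hprop a ha' b hb' hne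
      have hcol' : combCol hm f a b = 0 := by
        rw [← combColSym_mk hm f a b]; exact hcol
      unfold combCol at hcol'
      rw [dif_neg hal, dif_neg hbl] at hcol'
      exact absurd hcol' (by decide)
    have hL3 : 3 ≤ SL.card := by omega
    obtain ⟨T, hTsub, hTcard⟩ := Finset.exists_subset_card_eq hL3
    obtain ⟨a, b, c', hab, hac, hbc, rfl⟩ := Finset.card_eq_three.mp hTcard
    have hmem : ∀ x ∈ ({a, b, c'} : Finset (Fin n)), x ∈ S ∧ x.1 < m1 := by
      intro x hx
      have := mem_filter.mp (hTsub hx)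
      exact ⟨this.1, this.2⟩
    obtain ⟨haS, hal⟩ := hmem a (by simp)
    obtain ⟨hbS, hbl⟩ := hmem b (by simp)
    obtain ⟨hcS, hcl⟩ := hmem c' (by simp)
    refine hf1 {⟨a.1, hal⟩, ⟨b.1, hbl⟩, ⟨c'.1, hcl⟩} (SimpleGraph.is3Clique_iff.mpr ?_)
    refine ⟨⟨a.1, hal⟩, ⟨b.1, hbl⟩, ⟨c'.1, hcl⟩, ?_, ?_, ?_, rfl⟩
    · exact adj_left (hprop a haS b hbS hab).choose hal hbl
    · exact adj_left (hprop a haS c' hcS hac).choose hal hcl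
    · exact adj_left (hprop b hbS c' hcS hbc).choose hbl hcl
  · -- color 1 : at most one vertex on the left, 3 on the right → triangle in H2
    have hL1 : SL.card ≤ 1 := by
      rw [Finset.card_le_one]
      intro a ha b hb
      by_contra hne
      obtain ⟨ha', hal⟩ := mem_filter.mp ha
      obtain ⟨hb', hbl⟩ := mem_filter.mp hb
      obtain ⟨hadj, hcol⟩ := hprop a ha' b hb' hne
      have hcol' : combCol hm f a b = 1 := by
        rw [← combColSym_mk hm f a b]; exact hcol
      unfold combCol at hcol'
      rw [dif_pos hal, dif_pos hbl] at hcol'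
      exact absurd hcol' (by decide)
    have hR3 : 3 ≤ SR.card := by omega
    obtain ⟨T, hTsub, hTcard⟩ := Finset.exists_subset_card_eq hR3
    obtain ⟨a, b, c', hab, hac, hbc, rfl⟩ := Finset.card_eq_three.mp hTcard
    have hmem : ∀ x ∈ ({a, b, c'} : Finset (Fin n)), x ∈ S ∧ m1 ≤ x.1 := by
      intro x hx
      have := mem_filter.mp (hTsub hx)
      exact ⟨this.1, not_lt.mp this.2⟩
    obtain ⟨haS, hal⟩ := hmem a (by simp)
    obtain ⟨hbS, hbl⟩ := hmem b (by simp)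
    obtain ⟨hcS, hcl⟩ := hmem c' (by simp)
    refine hf2 {⟨a.1 - m1, by have := a.2; omega⟩, ⟨b.1 - m1, by have := b.2; omega⟩,
      ⟨c'.1 - m1, by have := c'.2; omega⟩} (SimpleGraph.is3Clique_iff.mpr ?_)
    refine ⟨_, _, _, ?_, ?_, ?_, rfl⟩
    · exact adj_right (hprop a haS b hbS hab).choose hal hbl
    · exact adj_right (hprop a haS c' hcS hac).choose hal hcl
    · exact adj_right (hprop b hbS c' hcS hbc).choose hbl hcl

lemma quarter_sq (n : ℕ) : (n - n/2) * (n/2) = n^2/4 := by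
  obtain ⟨a, rfl | rfl⟩ := Nat.even_or_odd' n
  · have h1 : 2*a - (2*a)/2 = a := by omega
    have h2 : (2*a)/2 = a := by omega
    rw [h1, h2, show (2*a)^2 = 4*(a*a) by ring, Nat.mul_div_cancel_left _ (by norm_num)]
  · have h1 : (2*a+1) - (2*a+1)/2 = a+1 := by omega
    have h2 : (2*a+1)/2 = a := by omega
    rw [h1, h2, show (2*a+1)^2 = 4*(a*a+a)+1 by ring, Nat.mul_add_div (by norm_num)]
    norm_num
    ring

theorem statement_4 (γ : ℝ) (hγ : 0 < γ) :
    ∃ n0 : ℕ, ∀ n : ℕ, n0 ≤ n → ∃ G : SimpleGraph (Fin n),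
      indepLE G (γ * n) ∧ 2 ^ (n ^ 2 / 4) ≤ numColorings G 2 4 := by
  classical
  set q : ℕ := max 1 ⌈γ⁻¹⌉₊ with hq_def
  have hq1 : 1 ≤ q := le_max_left _ _
  have hqγ : γ⁻¹ ≤ (q : ℝ) := by
    refine le_trans (Nat.le_ceil _) ?_
    exact_mod_cast le_max_right 1 ⌈γ⁻¹⌉₊
  obtain ⟨M, hM1, hM⟩ := ramsey q hq1
  refine ⟨2*M + 2, ?_⟩
  intro n hn
  set m2 := n / 2 with hm2_def
  set m1 := n - n / 2 with hm1_def
  have hm : m1 + m2 = n := by omega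
  have hm2M : M ≤ m2 := by omega
  have hm1M : M ≤ m1 := by omega
  obtain ⟨H1, hH1free, hH1ind⟩ := hM m1 hm1M
  obtain ⟨H2, hH2free, hH2ind⟩ := hM m2 hm2M
  refine ⟨combG hm H1 H2, ?_, ?_⟩
  · -- independence
    intro S hS
    have hm1pos : 0 < m1 := by omega
    have hm2pos : 0 < m2 := by omega
    have hfinal : S.card * q ≤ n := by
      by_cases hex : ∃ u ∈ S, u.1 < m1
      · have hall : ∀ v ∈ S, v.1 < m1 := by
          obtain ⟨u, hu, hul⟩ := hex
          intro v hv
          by_contra hvr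
          have hne : u ≠ v := by
            intro h; rw [h] at hul; exact hvr hul
          exact hS u hu v hv hne ⟨hne, Or.inr (Or.inr (Or.inl ⟨hul, not_lt.mp hvr⟩))⟩
        set g : Fin n → Fin m1 := fun v => if h : v.1 < m1 then ⟨v.1, h⟩ else ⟨0, hm1pos⟩
          with hg_def
        have hinj : Set.InjOn g S := by
          intro x hx y hy hxy
          rw [hg_def] at hxy
          simp only [dif_pos (hall x hx), dif_pos (hall y hy)] at hxy
          have h5 : x.1 = y.1 := congrArg (fun (z : Fin m1) => z.1) hxy
          exact Fin.ext h5
        have hindT : ∀ u ∈ S.image g, ∀ v ∈ S.image g, u ≠ v → ¬ H1.Adj u v := by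
          intro u hu v hv huv hadj
          obtain ⟨x, hx, rfl⟩ := Finset.mem_image.mp hu
          obtain ⟨y, hy, rfl⟩ := Finset.mem_image.mp hv
          have hxy : x ≠ y := fun h => huv (by rw [h])
          refine hS x hx y hy hxy ⟨hxy, Or.inl ⟨hall x hx, hall y hy, ?_⟩⟩
          rw [hg_def] at hadj
          simp only [dif_pos (hall x hx), dif_pos (hall y hy)] at hadj
          exact hadj
        have := hH1ind (S.image g) hindT
        rw [Finset.card_image_of_injOn hinj] at this
        omega
      · push_neg at hex
        set g : Fin n → Fin m2 := fun v => if h : v.1 < m1 then ⟨0, hm2pos⟩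
          else ⟨v.1 - m1, by have := v.2; omega⟩ with hg_def
        have hall : ∀ v ∈ S, ¬ v.1 < m1 := fun v hv => not_lt.mpr (by
          have := hex v hv; omega)
        have hinj : Set.InjOn g S := by
          intro x hx y hy hxy
          rw [hg_def] at hxy
          simp only [dif_neg (hall x hx), dif_neg (hall y hy)] at hxy
          have h5 : x.1 - m1 = y.1 - m1 := congrArg (fun (z : Fin m2) => z.1) hxy
          have hx1 := hex x hx
          have hy1 := hex y hy
          exact Fin.ext (by omega)
        have hindT : ∀ u ∈ S.image g, ∀ v ∈ S.image g, u ≠ v → ¬ H2.Adj u v := by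
          intro u hu v hv huv hadj
          obtain ⟨x, hx, rfl⟩ := Finset.mem_image.mp hu
          obtain ⟨y, hy, rfl⟩ := Finset.mem_image.mp hv
          have hxy : x ≠ y := fun h => huv (by rw [h])
          refine hS x hx y hy hxy ⟨hxy, Or.inr (Or.inl ⟨hex x hx, hex y hy, ?_⟩)⟩
          rw [hg_def] at hadj
          simp only [dif_neg (hall x hx), dif_neg (hall y hy)] at hadj
          exact hadj
        have := hH2ind (S.image g) hindT
        rw [Finset.card_image_of_injOn hinj] at this
        omega
    -- convert to reals
    have h1 : (S.card : ℝ) * q ≤ n := by exact_mod_cast hfinal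
    have h2 : (1:ℝ) ≤ γ * q := by
      have hq0 : (0:ℝ) < q := by exact_mod_cast hq1
      calc (1:ℝ) = γ * γ⁻¹ := (mul_inv_cancel₀ hγ.ne').symm
        _ ≤ γ * q := by nlinarith
    have h3 : (S.card : ℝ) * 1 ≤ (S.card : ℝ) * (γ * q) :=
      mul_le_mul_of_nonneg_left h2 (by positivity)
    have h4 : γ * ((S.card : ℝ) * q) ≤ γ * n := mul_le_mul_of_nonneg_left h1 hγ.le
    nlinarith
  · -- counting colorings
    set G := combG hm H1 H2 with hG_def
    set Φ : (Fin m1 × Fin m2 → Fin 2) → {φ : G.edgeSet → Fin 2 // ¬ HasMonoClique G φ 4} :=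
      fun f => ⟨fun e => combColSym hm f e.1, combCol_good hm H1 H2 hH1free hH2free f⟩
      with hΦ_def
    have hΦinj : Function.Injective Φ := by
      intro f g hfg
      funext p
      obtain ⟨⟨x, hx⟩, ⟨y, hy⟩⟩ := p
      have hxn : x < n := by omega
      have hyn : m1 + y < n := by omega
      set u0 : Fin n := ⟨x, hxn⟩ with hu0_def
      set v0 : Fin n := ⟨m1 + y, hyn⟩ with hv0_def
      have hu0l : u0.1 < m1 := hx
      have hv0l : ¬ v0.1 < m1 := by
        rw [hv0_def]
        simp only
        omega
      have hedge : G.Adj u0 v0 := by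
        refine ⟨?_, Or.inr (Or.inr (Or.inl ⟨hu0l, not_lt.mp hv0l⟩))⟩
        intro h
        have h6 : u0.1 = v0.1 := congrArg Fin.val h
        rw [hu0_def, hv0_def] at h6
        simp only at h6
        omega
      have h1 : (Φ f).1 ⟨s(u0, v0), hedge⟩ = (Φ g).1 ⟨s(u0, v0), hedge⟩ :=
        congrFun (congrArg Subtype.val hfg) ⟨s(u0, v0), hedge⟩
      have h2 : combColSym hm f s(u0, v0) = combColSym hm g s(u0, v0) := h1
      rw [combColSym_mk, combColSym_mk] at h2
      unfold combCol at h2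
      rw [dif_pos hu0l, dif_neg hv0l, dif_pos hu0l, dif_neg hv0l] at h2
      have hpair : ((⟨x, hx⟩ : Fin m1), (⟨y, hy⟩ : Fin m2))
          = ((⟨u0.1, hu0l⟩ : Fin m1), (⟨v0.1 - m1, by have := v0.2; omega⟩ : Fin m2)) := by
        refine Prod.ext_iff.mpr ⟨rfl, Fin.ext ?_⟩
        have hval : v0.1 = m1 + y := rfl
        simp only
        omega
      rw [hpair]
      exact h2
    have hcard1 : Nat.card (Fin m1 × Fin m2 → Fin 2) = 2 ^ (m1 * m2) := by
      rw [Nat.card_eq_fintype_card, Fintype.card_fun, Fintype.card_fin, Fintype.card_prod,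
        Fintype.card_fin, Fintype.card_fin]
    have hle := Nat.card_le_card_of_injective Φ hΦinj
    rw [hcard1] at hle
    rw [numColorings]
    calc 2 ^ (n^2/4) = 2 ^ (m1 * m2) := by rw [← quarter_sq n]
      _ ≤ _ := hle
end

section
/- For every ε > 0 and every integer k ≥ 3 there exists n_0 such that every weighted graph G on n ≥ n_0 vertices that contains no weighted complete subgraph of size k satisfies e(G) ≤ (b_k + ε)·n², where b_k = (k−3)/(2(k−1)) if k is odd and b_k = (3k−10)/(2(3k−4)) if k is even. -/
open Finset

/-- A weighted complete subgraph `(X, Y)` of size `k`. -/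
def HasWeightedClique {n : ℕ} (w : Fin n → Fin n → ℝ) (k : ℕ) : Prop :=
  ∃ X Y : Finset (Fin n), X ⊆ Y ∧ X.card + Y.card = k ∧
    (∀ u ∈ X, ∀ v ∈ X, u ≠ v → w u v = 1) ∧
    (∀ u ∈ Y, ∀ v ∈ Y, u ≠ v → 1 / 2 ≤ w u v)

/-- `T(G)`: sum over unordered triples of distinct vertices of the product of the three
pair weights (`w` is symmetric with zero diagonal, so the ordered sum divided by 6). -/
noncomputable def weightT {n : ℕ} (w : Fin n → Fin n → ℝ) : ℝ :=
  (1 / 6) * ∑ u : Fin n, ∑ v : Fin n, ∑ x : Fin n, w u v * w v x * w u x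

/-- `e(G)`: sum of the weights over unordered pairs of distinct vertices. -/
noncomputable def weightE {n : ℕ} (w : Fin n → Fin n → ℝ) : ℝ :=
  (1 / 2) * ∑ u : Fin n, ∑ v : Fin n, w u v


lemma aux_indep {V : Type*} [DecidableEq V] (adj : V → V → Prop) [DecidableRel adj]
    (hsym : ∀ i j, adj i j → adj j i) (hirr : ∀ i, ¬ adj i i) :
    ∀ (N : ℕ) (S : Finset V) (u : V → ℝ), S.card ≤ N →
      (∀ i ∈ S, 0 ≤ u i) →
      (∀ i ∈ S, (∑ j ∈ S.filter (fun j => adj i j), u j) ≤ 1 - 2 * u i) →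
      ∃ I : Finset V, I ⊆ S ∧ (∀ i ∈ I, ∀ j ∈ I, i ≠ j → ¬ adj i j) ∧
        (∑ i ∈ S, (3 * u i - 1/2)) ≤ (I.card : ℝ) := by
  intro N
  induction N with
  | zero =>
    intro S u hS hu hdeg
    have : S = ∅ := Finset.card_eq_zero.mp (Nat.le_zero.mp hS)
    subst this
    exact ⟨∅, Finset.Subset.refl _, by simp, by simp⟩
  | succ N ih =>
    intro S u hS hu hdeg
    rcases S.eq_empty_or_nonempty with rfl | hne
    · exact ⟨∅, Finset.Subset.refl _, by simp, by simp⟩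
    obtain ⟨v, hvS, hvmax⟩ := S.exists_max_image u hne
    set Nv : Finset V := S.filter (fun j => adj v j) with hNv
    have hvnotNv : v ∉ Nv := by
      simp [hNv, hirr v]
    set D : Finset V := insert v Nv with hD
    have hDS : D ⊆ S := by
      intro x hx
      rcases Finset.mem_insert.mp hx with rfl | hx
      · exact hvS
      · exact Finset.mem_of_mem_filter _ hx
    set S' : Finset V := S \ D with hS'
    have hcard' : S'.card ≤ N := by
      have h1 : S'.card = S.card - D.card := Finset.card_sdiff_of_subset hDS
      have h2 : 1 ≤ D.card := Finset.card_pos.mpr ⟨v, Finset.mem_insert_self _ _⟩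
      omega
    have hsub' : S' ⊆ S := Finset.sdiff_subset
    obtain ⟨I', hI'sub, hI'ind, hI'sum⟩ := ih S' u hcard'
      (fun i hi => hu i (hsub' hi))
      (by
        intro i hi
        refine le_trans ?_ (hdeg i (hsub' hi))
        apply Finset.sum_le_sum_of_subset_of_nonneg
        · exact Finset.filter_subset_filter _ hsub'
        · intro j hj _
          exact hu j (Finset.mem_of_mem_filter _ hj))
    have hvI' : v ∉ I' := fun h => by
      have := hI'sub h
      rw [hS', Finset.mem_sdiff] at this
      exact this.2 (Finset.mem_insert_self _ _)
    have hnotadj : ∀ x ∈ I', ¬ adj v x := by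
      intro x hx hadj
      have hxS : x ∈ S := hsub' (hI'sub hx)
      have hxNv : x ∈ Nv := Finset.mem_filter.mpr ⟨hxS, hadj⟩
      exact (Finset.mem_sdiff.mp (hI'sub hx)).2 (Finset.mem_insert_of_mem hxNv)
    refine ⟨insert v I', ?_, ?_, ?_⟩
    · intro x hx
      rcases Finset.mem_insert.mp hx with rfl | hx
      · exact hvS
      · exact hsub' (hI'sub hx)
    · intro i hi j hj hij hadj
      rcases Finset.mem_insert.mp hi with hiv | hi' <;>
        rcases Finset.mem_insert.mp hj with hjv | hj'
      · exact hij (hiv.trans hjv.symm)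
      · rw [hiv] at hadj; exact hnotadj j hj' hadj
      · rw [hjv] at hadj; exact hnotadj i hi' (hsym _ _ hadj)
      · exact hI'ind i hi' j hj' hij hadj
    · -- the sum bound
      have hsplit : (∑ i ∈ S, (3 * u i - 1/2))
          = (∑ i ∈ S', (3 * u i - 1/2)) + (∑ i ∈ D, (3 * u i - 1/2)) :=
        (Finset.sum_sdiff hDS).symm
      have hDsum : (∑ i ∈ D, (3 * u i - 1/2))
          = (3 * u v - 1/2) + (∑ i ∈ Nv, (3 * u i - 1/2)) := by
        rw [hD, Finset.sum_insert hvnotNv]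
      set A : ℝ := ∑ i ∈ Nv, u i with hA
      set d : ℕ := Nv.card with hd
      have hNvsum : (∑ i ∈ Nv, (3 * u i - 1/2)) = 3 * A - (d : ℝ)/2 := by
        rw [Finset.sum_sub_distrib, ← Finset.mul_sum, Finset.sum_const, hA, hd]
        push_cast
        ring
      have hA1 : A ≤ 1 - 2 * u v := by
        rw [hA]; exact hdeg v hvS
      have hA2 : A ≤ (d : ℝ) * u v := by
        rw [hA, hd]
        calc (∑ i ∈ Nv, u i) ≤ ∑ i ∈ Nv, u v :=
              Finset.sum_le_sum (fun i hi => hvmax i (Finset.mem_of_mem_filter _ hi))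
          _ = (Nv.card : ℝ) * u v := by rw [Finset.sum_const, nsmul_eq_mul]
      have hA0 : 0 ≤ A := Finset.sum_nonneg (fun i hi => hu i (Finset.mem_of_mem_filter _ hi))
      have huv0 : 0 ≤ u v := hu v hvS
      have huv2 : u v ≤ 1/2 := by linarith
      have hDle : (∑ i ∈ D, (3 * u i - 1/2)) ≤ 1 := by
        rw [hDsum, hNvsum]
        rcases Nat.lt_or_ge d 3 with hd3 | hd3
        · interval_cases d
          · push_cast at hA2 ⊢
            have : A = 0 := le_antisymm (by linarith) hA0
            rw [this]; linarith
          · rcases le_or_gt (u v) (1/3) with h | h <;>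
              (push_cast at hA2 ⊢; linarith)
          · rcases le_or_gt (u v) (1/6) with h | h <;>
              (push_cast at hA2 ⊢; linarith)
        · have : (3:ℝ) ≤ (d:ℝ) := by exact_mod_cast hd3
          linarith
      have hcard : ((insert v I').card : ℝ) = (I'.card : ℝ) + 1 := by
        rw [Finset.card_insert_of_notMem hvI']; push_cast; ring
      rw [hsplit, hcard]
      linarith

lemma aux_shrink {n : ℕ} (w : Fin n → Fin n → ℝ) (k : ℕ) :
    ∀ t : ℕ, k ≤ t → ∀ X Y : Finset (Fin n), X ⊆ Y →
      (∀ u ∈ X, ∀ v ∈ X, u ≠ v → w u v = 1) →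
      (∀ u ∈ Y, ∀ v ∈ Y, u ≠ v → 1 / 2 ≤ w u v) →
      X.card + Y.card = t → HasWeightedClique w k := by
  intro t hkt
  induction t, hkt using Nat.le_induction with
  | base =>
    intro X Y hXY h1 h2 hc
    exact ⟨X, Y, hXY, hc, h1, h2⟩
  | succ t hkt ih =>
    intro X Y hXY h1 h2 hc
    rcases (Y \ X).eq_empty_or_nonempty with hempty | ⟨y, hy⟩
    · have hYX : Y ⊆ X := by
        intro a ha
        by_contra hax
        exact absurd (Finset.mem_sdiff.mpr ⟨ha, hax⟩) (by simp [hempty])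
      have hXE : X = Y := Finset.Subset.antisymm hXY hYX
      have hxy : X.card = Y.card := by rw [hXE]
      have hXne : X.Nonempty := by
        rw [← Finset.card_pos]
        omega
      obtain ⟨x, hx⟩ := hXne
      refine ih (X.erase x) Y (fun a ha => hXY (Finset.erase_subset _ _ ha)) ?_ h2 ?_
      · intro u hu v hv huv
        exact h1 u (Finset.erase_subset _ _ hu) v (Finset.erase_subset _ _ hv) huv
      · rw [Finset.card_erase_of_mem hx]
        omega
    · have hyY : y ∈ Y := (Finset.mem_sdiff.mp hy).1
      have hyX : y ∉ X := (Finset.mem_sdiff.mp hy).2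
      refine ih X (Y.erase y) ?_ h1 ?_ ?_
      · intro a ha
        exact Finset.mem_erase.mpr ⟨fun h => hyX (h ▸ ha), hXY ha⟩
      · intro u hu v hv huv
        exact h2 u (Finset.erase_subset _ _ hu) v (Finset.erase_subset _ _ hv) huv
      · rw [Finset.card_erase_of_mem hyY]
        have : 1 ≤ Y.card := Finset.card_pos.mpr ⟨y, hyY⟩
        omega


noncomputable def lamW {n : ℕ} (w : Fin n → Fin n → ℝ) (p : Fin n → ℝ) : ℝ :=
  ∑ u, ∑ v, w u v * p u * p v

lemma lamW_cont {n : ℕ} (w : Fin n → Fin n → ℝ) : Continuous (lamW w) := by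
  unfold lamW
  refine continuous_finset_sum _ (fun u _ => continuous_finset_sum _ (fun v _ => ?_))
  exact (continuous_const.mul (continuous_apply u)).mul (continuous_apply v)

lemma sumE {n : ℕ} (f : Fin n → ℝ) (i j : Fin n) (hij : i ≠ j) :
    ∑ x, f x * ((if x = i then (1:ℝ) else 0) - (if x = j then 1 else 0)) = f i - f j := by
  simp [mul_sub, mul_ite, Finset.sum_sub_distrib]

lemma sumE' {n : ℕ} (f : Fin n → ℝ) (i j : Fin n) (hij : i ≠ j) :
    ∑ x, ((if x = i then (1:ℝ) else 0) - (if x = j then 1 else 0)) * f x = f i - f j := by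
  rw [← sumE f i j hij]
  exact Finset.sum_congr rfl fun x _ => by ring

lemma lam_shift {n : ℕ} (w : Fin n → Fin n → ℝ)
    (hsym : ∀ u v, w u v = w v u) (hdiag : ∀ v, w v v = 0)
    (p : Fin n → ℝ) (i j : Fin n) (hij : i ≠ j) (t : ℝ) :
    lamW w (fun x => p x + t * ((if x = i then (1:ℝ) else 0) - (if x = j then 1 else 0)))
      = lamW w p + 2 * t * ((∑ v, w i v * p v) - (∑ v, w j v * p v)) - 2 * t^2 * w i j := by
  set E : Fin n → ℝ := fun x => (if x = i then (1:ℝ) else 0) - (if x = j then 1 else 0) with hE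
  set d : Fin n → ℝ := fun x => ∑ v, w x v * p v with hd
  have expand : lamW w (fun x => p x + t * E x)
      = lamW w p + (t * ∑ u, ∑ v, E u * (w u v * p v))
        + (t * ∑ u, ∑ v, E v * (w u v * p u))
        + (t^2 * ∑ u, ∑ v, E u * (w u v * E v)) := by
    unfold lamW
    have hterm : ∀ u v : Fin n, w u v * (p u + t * E u) * (p v + t * E v)
        = w u v * p u * p v + t * (E u * (w u v * p v)) + t * (E v * (w u v * p u))
          + t^2 * (E u * (w u v * E v)) := fun u v => by ring
    simp_rw [hterm]
    simp only [Finset.sum_add_distrib, ← Finset.mul_sum]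
  have T2 : (∑ u, ∑ v, E u * (w u v * p v)) = d i - d j := by
    have : ∀ u, (∑ v, E u * (w u v * p v)) = E u * d u := by
      intro u; rw [hd, Finset.mul_sum]
    rw [Finset.sum_congr rfl fun u _ => this u]
    exact sumE' d i j hij
  have T3 : (∑ u, ∑ v, E v * (w u v * p u)) = d i - d j := by
    rw [Finset.sum_comm]
    have : ∀ v, (∑ u, E v * (w u v * p u)) = E v * d v := by
      intro v
      have h2 : (∑ u, E v * (w u v * p u)) = ∑ u, E v * (w v u * p u) :=
        Finset.sum_congr rfl fun u _ => by rw [hsym u v]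
      rw [h2, hd, Finset.mul_sum]
    rw [Finset.sum_congr rfl fun v _ => this v]
    exact sumE' d i j hij
  have T4 : (∑ u, ∑ v, E u * (w u v * E v)) = -2 * w i j := by
    have : ∀ u, (∑ v, E u * (w u v * E v)) = E u * (w u i - w u j) := by
      intro u
      rw [← Finset.mul_sum, sumE (fun v => w u v) i j hij]
    rw [Finset.sum_congr rfl fun u _ => this u]
    rw [sumE' (fun u => w u i - w u j) i j hij]
    rw [hdiag i, hdiag j, hsym j i]
    ring
  rw [expand, T2, T3, T4, hd]
  ring

lemma slope_zero {a W c : ℝ} (hc : 0 < c) (hW0 : 0 ≤ W) (hW1 : W ≤ 1)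
    (h : ∀ t : ℝ, |t| ≤ c → 2 * t * a - 2 * t^2 * W ≤ 0) : a = 0 := by
  by_contra ha
  rcases lt_or_gt_of_ne ha with hneg | hpos
  · set s := min c (-a/2) with hs
    have hs0 : 0 < s := lt_min hc (by linarith)
    have hsc : s ≤ c := min_le_left _ _
    have hs2 : s ≤ -a/2 := min_le_right _ _
    have := h (-s) (by rw [abs_neg, abs_of_pos hs0]; exact hsc)
    nlinarith [sq_nonneg s, mul_pos hs0 hs0]
  · set s := min c (a/2) with hs
    have hs0 : 0 < s := lt_min hc (by linarith)
    have hsc : s ≤ c := min_le_left _ _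
    have hs2 : s ≤ a/2 := min_le_right _ _
    have := h s (by rw [abs_of_pos hs0]; exact hsc)
    nlinarith [sq_nonneg s, mul_pos hs0 hs0]

lemma key_lemma {n k : ℕ} (hk : 3 ≤ k) (w : Fin n → Fin n → ℝ)
    (hsym : ∀ u v, w u v = w v u) (hdiag : ∀ v, w v v = 0)
    (hvals : ∀ u v : Fin n, u ≠ v → w u v = 0 ∨ w u v = 1 / 2 ∨ w u v = 1)
    (hno : ¬ HasWeightedClique w k)
    (p : Fin n → ℝ) (hp : p ∈ stdSimplex ℝ (Fin n)) :
    lamW w p ≤ 1 - 3 / ((k:ℝ) - 1 + (((k-1)/2 : ℕ) : ℝ)) := by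
  classical
  have hw0 : ∀ u v, 0 ≤ w u v := by
    intro u v
    by_cases huv : u = v
    · rw [huv, hdiag]
    · rcases hvals u v huv with h | h | h <;> rw [h] <;> norm_num
  have hw1 : ∀ u v, w u v ≤ 1 := by
    intro u v
    by_cases huv : u = v
    · rw [huv, hdiag]; norm_num
    · rcases hvals u v huv with h | h | h <;> rw [h] <;> norm_num
  obtain ⟨p0, hp0, hmax0⟩ := (isCompact_stdSimplex ℝ (Fin n)).exists_isMaxOn ⟨p, hp⟩
    (lamW_cont w).continuousOn
  set T : Set ℕ := {m | ∃ q, q ∈ stdSimplex ℝ (Fin n) ∧ IsMaxOn (lamW w) (stdSimplex ℝ (Fin n)) q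
    ∧ (univ.filter (fun i => 0 < q i)).card = m} with hT
  have hTne : T.Nonempty := ⟨_, p0, hp0, hmax0, rfl⟩
  obtain ⟨q, hq, hqmax, hqcard⟩ := Nat.sInf_mem hTne
  set S : Finset (Fin n) := univ.filter (fun i => 0 < q i) with hS
  have hq0 : ∀ i, 0 ≤ q i := hq.1
  have hq1 : ∑ i, q i = 1 := hq.2
  have hoff : ∀ i, i ∉ S → q i = 0 := by
    intro i hi
    rw [hS, Finset.mem_filter] at hi
    push_neg at hi
    have := hi (Finset.mem_univ i)
    linarith [hq0 i]
  have hmemS : ∀ i, i ∈ S → 0 < q i := by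
    intro i hi
    rw [hS, Finset.mem_filter] at hi
    exact hi.2
  have hSsum : ∑ i ∈ S, q i = 1 := by
    rw [Finset.sum_subset (Finset.subset_univ S) (fun x _ hx => hoff x hx)]
    exact hq1
  have hSne : S.Nonempty := by
    rcases S.eq_empty_or_nonempty with h | h
    · rw [h] at hSsum; simp at hSsum
    · exact h
  set d : Fin n → ℝ := fun x => ∑ v, w x v * q v with hd
  set M : ℝ := lamW w q with hM
  have hpM : lamW w p ≤ M := hqmax hp
  -- KKT conditions
  have hkkt : ∀ i ∈ S, ∀ j ∈ S, d i = d j := by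
    intro i hi j hj
    by_cases hij : i = j
    · rw [hij]
    · set E : Fin n → ℝ := fun x => (if x = i then (1:ℝ) else 0) - (if x = j then 1 else 0)
        with hE
      have hEi : E i = 1 := by simp [hE, hij]
      have hEj : E j = -1 := by simp [hE, Ne.symm hij]
      have hEo : ∀ x, x ≠ i → x ≠ j → E x = 0 := fun x h1 h2 => by simp [hE, h1, h2]
      have hmem : ∀ t : ℝ, -q i ≤ t → t ≤ q j →
          (fun x => q x + t * E x) ∈ stdSimplex ℝ (Fin n) := by
        intro t ht1 ht2
        constructor
        · intro x
          show 0 ≤ q x + t * E x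
          by_cases hxi : x = i
          · subst hxi
            rw [hEi]
            linarith
          · by_cases hxj : x = j
            · subst hxj
              rw [hEj]
              linarith
            · rw [hEo x hxi hxj]
              have := hq0 x
              linarith
        · have hEsum : ∑ x, E x = 0 := by
            simp only [hE, Finset.sum_sub_distrib, Finset.sum_ite_eq' univ,
              Finset.mem_univ, if_pos]
            ring
          show ∑ x, (q x + t * E x) = 1
          rw [Finset.sum_add_distrib, hq1, ← Finset.mul_sum, hEsum]
          ring
      have hshift : ∀ t : ℝ, lamW w (fun x => q x + t * E x)
          = M + 2 * t * (d i - d j) - 2 * t^2 * w i j := by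
        intro t
        rw [hE, hM, hd]
        exact lam_shift w hsym hdiag q i j hij t
      set c : ℝ := min (q i) (q j) with hc
      have hcpos : 0 < c := lt_min (hmemS i hi) (hmemS j hj)
      have hslope := slope_zero (a := d i - d j) (W := w i j) hcpos (hw0 i j) (hw1 i j) (fun t ht => by
        have h1 : -q i ≤ t := by
          rcases abs_le.mp ht with ⟨h1, _⟩
          have : c ≤ q i := min_le_left _ _
          linarith
        have h2 : t ≤ q j := by
          rcases abs_le.mp ht with ⟨_, h2⟩
          have : c ≤ q j := min_le_right _ _
          linarith
        have hle : lamW w (fun x => q x + t * E x) ≤ M := hqmax (hmem t h1 h2)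
        rw [hshift t] at hle
        linarith)
      linarith [hslope]
  -- the common value of d on S is M
  have hlam_eq : M = ∑ u ∈ S, q u * d u := by
    have h1 : M = ∑ u, q u * d u := by
      rw [hM]; unfold lamW
      refine Finset.sum_congr rfl fun u _ => ?_
      rw [hd]
      dsimp only
      rw [Finset.mul_sum]
      exact Finset.sum_congr rfl fun v _ => by ring
    rw [h1]
    exact (Finset.sum_subset (Finset.subset_univ S)
      (fun x _ hx => by rw [hoff x hx]; ring)).symm
  have hdM : ∀ i ∈ S, d i = M := by
    obtain ⟨i0, hi0⟩ := hSne
    have hconst : ∀ i ∈ S, d i = d i0 := fun i hi => hkkt i hi i0 hi0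
    have hMi0 : M = d i0 := by
      rw [hlam_eq]
      rw [Finset.sum_congr rfl (fun u hu => by rw [hconst u hu])]
      rw [← Finset.sum_mul, hSsum, one_mul]
    intro i hi
    rw [hconst i hi, ← hMi0]
  -- no zero pairs in the support
  have hnz : ∀ i ∈ S, ∀ j ∈ S, i ≠ j → w i j ≠ 0 := by
    intro i hi j hj hij hzero
    set E : Fin n → ℝ := fun x => (if x = i then (1:ℝ) else 0) - (if x = j then 1 else 0)
      with hE
    set q2 : Fin n → ℝ := fun x => q x + q j * E x with hq2
    have hEi : E i = 1 := by simp [hE, hij]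
    have hEj : E j = -1 := by simp [hE, Ne.symm hij]
    have hEo : ∀ x, x ≠ i → x ≠ j → E x = 0 := fun x h1 h2 => by simp [hE, h1, h2]
    have hq2j : q2 j = 0 := by
      show q j + q j * E j = 0
      rw [hEj]; ring
    have hq2i : q2 i = q i + q j := by
      show q i + q j * E i = q i + q j
      rw [hEi]; ring
    have hq2other : ∀ x, x ≠ i → x ≠ j → q2 x = q x := by
      intro x h1 h2
      show q x + q j * E x = q x
      rw [hEo x h1 h2]; ring
    have hq2mem : q2 ∈ stdSimplex ℝ (Fin n) := by
      constructor
      · intro x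
        by_cases hxi : x = i
        · subst hxi
          rw [hq2i]
          have := hq0 j; have := hq0 x
          linarith
        · by_cases hxj : x = j
          · subst hxj
            rw [hq2j]
          · rw [hq2other x hxi hxj]
            exact hq0 x
      · have hEsum : ∑ x, E x = 0 := by
          simp only [hE, Finset.sum_sub_distrib, Finset.sum_ite_eq' univ,
            Finset.mem_univ, if_pos]
          ring
        show ∑ x, (q x + q j * E x) = 1
        rw [Finset.sum_add_distrib, hq1, ← Finset.mul_sum, hEsum]
        ring
    have hq2lam : lamW w q2 = M := by
      have hls := lam_shift w hsym hdiag q i j hij (q j)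
      have hdd : d i = d j := hkkt i hi j hj
      rw [hd] at hdd
      dsimp only at hdd
      rw [hq2, hE, hls, hdd, hzero, hM]
      ring
    have hq2max : IsMaxOn (lamW w) (stdSimplex ℝ (Fin n)) q2 := by
      intro x hx
      have := hqmax hx
      simp only [Set.mem_setOf_eq]
      rw [hq2lam]
      exact this
    have hsupp2 : univ.filter (fun x => 0 < q2 x) = S.erase j := by
      ext x
      simp only [Finset.mem_filter, Finset.mem_univ, true_and, Finset.mem_erase]
      constructor
      · intro hx
        by_cases hxj : x = j
        · exfalso
          subst hxj
          rw [hq2j] at hx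
          exact lt_irrefl 0 hx
        · refine ⟨hxj, ?_⟩
          by_cases hxi : x = i
          · subst hxi; exact hi
          · rw [hq2other x hxi hxj] at hx
            rw [hS, Finset.mem_filter]
            exact ⟨Finset.mem_univ x, hx⟩
      · rintro ⟨hxj, hxS⟩
        by_cases hxi : x = i
        · subst hxi
          rw [hq2i]
          have := hq0 j
          have := hmemS x hxS
          linarith
        · rw [hq2other x hxi hxj]
          exact hmemS x hxS
    have hjc : 1 ≤ S.card := Finset.card_pos.mpr ⟨j, hj⟩
    have hmemT : (S.card - 1) ∈ T := by
      refine ⟨q2, hq2mem, hq2max, ?_⟩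
      rw [hsupp2, Finset.card_erase_of_mem hj]
    have := Nat.sInf_le hmemT
    omega
  have hhalf : ∀ i ∈ S, ∀ j ∈ S, i ≠ j → w i j = 1/2 ∨ w i j = 1 := by
    intro i hi j hj hij
    rcases hvals i j hij with h | h | h
    · exact absurd h (hnz i hi j hj hij)
    · exact Or.inl h
    · exact Or.inr h
  set δ : ℝ := 2 - 2 * M with hδ
  -- mass of the half-weight neighbourhood
  have hkey2 : ∀ i ∈ S, (∑ v ∈ S.filter (fun v => w i v = 1/2), q v) = δ - 2 * q i := by
    intro i hi
    have hdi : d i = (∑ v ∈ S.filter (fun v => w i v = 1), q v)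
        + (1/2) * (∑ v ∈ S.filter (fun v => w i v = 1/2), q v) := by
      have h0 : d i = ∑ v ∈ S, w i v * q v := by
        rw [hd]
        dsimp only
        exact (Finset.sum_subset (Finset.subset_univ S)
          (fun x _ hx => by rw [hoff x hx]; ring)).symm
      have hterm : ∀ v ∈ S, w i v * q v
          = (if w i v = 1 then q v else 0) + (if w i v = 1/2 then (1/2) * q v else 0) := by
        intro v hv
        by_cases hvi : v = i
        · subst hvi
          rw [hdiag]
          rw [if_neg (by norm_num), if_neg (by norm_num)]
          ring
        · rcases hhalf i hi v hv (Ne.symm hvi) with h | h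
          · rw [h, if_neg (by norm_num), if_pos rfl]
            ring
          · rw [h, if_pos rfl, if_neg (by norm_num)]
            ring
      rw [h0, Finset.sum_congr rfl hterm, Finset.sum_add_distrib,
        ← Finset.sum_filter, ← Finset.sum_filter, Finset.mul_sum]
    have hone : (1:ℝ) = q i + (∑ v ∈ S.filter (fun v => w i v = 1), q v)
        + (∑ v ∈ S.filter (fun v => w i v = 1/2), q v) := by
      have hterm : ∀ v ∈ S, q v = (if v = i then q v else 0)
          + ((if w i v = 1 then q v else 0) + (if w i v = 1/2 then q v else 0)) := by
        intro v hv
        by_cases hvi : v = i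
        · subst hvi
          rw [hdiag] at *
          rw [if_pos rfl, if_neg (by norm_num), if_neg (by norm_num)]
          ring
        · rcases hhalf i hi v hv (Ne.symm hvi) with h | h
          · rw [h, if_neg hvi, if_neg (by norm_num), if_pos rfl]
            ring
          · rw [h, if_neg hvi, if_pos rfl, if_neg (by norm_num)]
            ring
      have hii : ∑ v ∈ S, (if v = i then q v else 0) = q i := by
        rw [Finset.sum_ite_eq' S i q]
        exact if_pos hi
      have hsum2 : ∑ v ∈ S, q v = q i + (∑ v ∈ S.filter (fun v => w i v = 1), q v)
          + (∑ v ∈ S.filter (fun v => w i v = 1/2), q v) := by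
        rw [Finset.sum_congr rfl hterm, Finset.sum_add_distrib,
          Finset.sum_add_distrib, hii, ← Finset.sum_filter, ← Finset.sum_filter]
        ring
      rw [← hsum2]
      exact hSsum.symm
    have hdMi : d i = M := hdM i hi
    rw [hdMi] at hdi
    rw [hδ]
    linarith
  have hδpos : 0 < δ := by
    obtain ⟨i0, hi0⟩ := hSne
    have h1 := hkey2 i0 hi0
    have h2 : 0 ≤ ∑ v ∈ S.filter (fun v => w i0 v = 1/2), q v :=
      Finset.sum_nonneg (fun v _ => hq0 v)
    have := hmemS i0 hi0
    linarith
  -- apply the independent set lemma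
  have hadj_sym : ∀ a b : Fin n, (a ≠ b ∧ w a b = 1/2) → (b ≠ a ∧ w b a = 1/2) := by
    intro a b ⟨h1, h2⟩
    exact ⟨h1.symm, by rw [← hsym a b]; exact h2⟩
  have hadj_irr : ∀ a : Fin n, ¬ (a ≠ a ∧ w a a = 1/2) := by
    intro a ⟨h1, _⟩
    exact h1 rfl
  obtain ⟨I, hIS, hIind, hIsum⟩ := aux_indep (fun a b => a ≠ b ∧ w a b = 1/2)
    hadj_sym hadj_irr S.card S (fun i => q i / δ) le_rfl
    (fun i _ => div_nonneg (hq0 i) hδpos.le)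
    (by
      intro i hi
      have hfilt : S.filter (fun j => i ≠ j ∧ w i j = 1/2) = S.filter (fun j => w i j = 1/2) := by
        refine Finset.filter_congr fun j hj => ?_
        constructor
        · exact fun h => h.2
        · intro h
          refine ⟨?_, h⟩
          intro hijeq
          rw [← hijeq, hdiag] at h
          norm_num at h
      rw [hfilt, ← Finset.sum_div, hkey2 i hi]
      have heq : (δ - 2 * q i)/δ = 1 - 2 * (q i/δ) := by
        rw [sub_div, div_self hδpos.ne']
        ring
      rw [heq])
  -- translate the sum bound
  have hL : (3 / δ - (S.card : ℝ)/2) ≤ (I.card : ℝ) := by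
    have h1 : ∑ i ∈ S, (3 * (q i / δ) - 1/2) = 3 / δ - (S.card : ℝ)/2 := by
      rw [Finset.sum_sub_distrib, Finset.sum_const, nsmul_eq_mul]
      have h2 : ∑ i ∈ S, 3 * (q i / δ) = 3 / δ := by
        have h3 : ∀ i ∈ S, 3 * (q i / δ) = (3/δ) * q i := fun i _ => by ring
        rw [Finset.sum_congr rfl h3, ← Finset.mul_sum, hSsum, mul_one]
      rw [h2]
      ring
    rw [← h1]
    exact hIsum
  -- clique bounds from the no-weighted-clique hypothesis
  have hI1 : ∀ a ∈ I, ∀ b ∈ I, a ≠ b → w a b = 1 := by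
    intro a ha b hb hab
    have hni := hIind a ha b hb hab
    push_neg at hni
    have hwne := hni hab
    rcases hhalf a (hIS ha) b (hIS hb) hab with h | h
    · exact absurd h hwne
    · exact h
  have hS2 : ∀ a ∈ S, ∀ b ∈ S, a ≠ b → 1/2 ≤ w a b := by
    intro a ha b hb hab
    rcases hhalf a ha b hb hab with h | h <;> rw [h] <;> norm_num
  have hI2 : ∀ a ∈ I, ∀ b ∈ I, a ≠ b → 1/2 ≤ w a b := by
    intro a ha b hb hab
    rw [hI1 a ha b hb hab]
    norm_num
  have hb1 : I.card + S.card ≤ k - 1 := by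
    by_contra hcon
    push_neg at hcon
    exact hno (aux_shrink w k (I.card + S.card) (by omega) I S hIS hI1 hS2 rfl)
  have hb2 : I.card + I.card ≤ k - 1 := by
    by_contra hcon
    push_neg at hcon
    exact hno (aux_shrink w k (I.card + I.card) (by omega) I I
      (Finset.Subset.refl I) hI1 hI2 rfl)
  have hIh : I.card ≤ (k-1)/2 := by omega
  -- final arithmetic
  have hfin : 6 ≤ δ * (2*(I.card:ℝ) + (S.card:ℝ)) := by
    have h1 : 3 / δ ≤ (I.card:ℝ) + (S.card:ℝ)/2 := by linarith
    rw [div_le_iff₀ hδpos] at h1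
    nlinarith
  have hcastN : (2*I.card + S.card : ℕ) ≤ (k - 1) + (k-1)/2 := by omega
  have hX : (0:ℝ) < (k:ℝ) - 1 + (((k-1)/2 : ℕ) : ℝ) := by
    have h2 : (3:ℝ) ≤ (k:ℝ) := by exact_mod_cast hk
    have h3 : (0:ℝ) ≤ (((k-1)/2 : ℕ) : ℝ) := Nat.cast_nonneg _
    linarith
  have hcast : 2*(I.card:ℝ) + (S.card:ℝ) ≤ (k:ℝ) - 1 + (((k-1)/2 : ℕ) : ℝ) := by
    have h1 : ((2*I.card + S.card : ℕ) : ℝ) ≤ (((k - 1) + (k-1)/2 : ℕ) : ℝ) :=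
      Nat.cast_le.mpr hcastN
    have h2 : ((k - 1 : ℕ) : ℝ) = (k:ℝ) - 1 := by
      rw [Nat.cast_sub (by omega : 1 ≤ k)]
      norm_num
    push_cast at h1
    rw [h2] at h1
    push_cast
    linarith
  have hfin2 : 6 ≤ δ * ((k:ℝ) - 1 + (((k-1)/2 : ℕ) : ℝ)) := by
    have h9 := mul_le_mul_of_nonneg_left hcast hδpos.le
    exact le_trans hfin h9
  have hMle : M ≤ 1 - 3 / ((k:ℝ) - 1 + (((k-1)/2 : ℕ) : ℝ)) := by
    have h1 : 6 / ((k:ℝ) - 1 + (((k-1)/2 : ℕ) : ℝ)) ≤ δ := by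
      rw [div_le_iff₀ hX]
      linarith
    have h2 : 3 / ((k:ℝ) - 1 + (((k-1)/2 : ℕ) : ℝ))
        = (6 / ((k:ℝ) - 1 + (((k-1)/2 : ℕ) : ℝ)))/2 := by
      ring
    rw [h2]
    rw [hδ] at h1
    linarith
  linarith

lemma bconst_eq {k : ℕ} (hk : 3 ≤ k) :
    1 - 3 / ((k:ℝ) - 1 + (((k-1)/2 : ℕ) : ℝ)) = 2 * bconst k := by
  unfold bconst
  rcases Nat.even_or_odd k with he | ho
  · obtain ⟨a, rfl⟩ := he
    have ha : 2 ≤ a := by omega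
    have hna : ¬ Odd (a + a) := by simp [Nat.not_odd_iff_even, Nat.even_add]
    rw [if_neg hna]
    have h1 : ((a + a - 1)/2 : ℕ) = a - 1 := by omega
    rw [h1]
    have h2 : (((a - 1 : ℕ)) : ℝ) = (a : ℝ) - 1 := by
      have h4 : 1 ≤ a := by omega
      push_cast [h4]; ring
    rw [h2]
    have h3 : ((a + a : ℕ) : ℝ) = 2 * (a:ℝ) := by push_cast; ring
    rw [h3]
    have ha' : (2:ℝ) ≤ (a:ℝ) := by exact_mod_cast ha
    have d1 : 2 * (a:ℝ) - 1 + ((a:ℝ) - 1) ≠ 0 := by nlinarith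
    have d2 : 2 * (3 * (2 * (a:ℝ)) - 4) ≠ 0 := by nlinarith
    field_simp
    have d4 : (-4 + (a:ℝ) * 6) ≠ 0 := by nlinarith
    ring_nf
    field_simp
    ring
  · obtain ⟨a, rfl⟩ := ho
    have ha : 1 ≤ a := by omega
    rw [if_pos ⟨a, rfl⟩]
    have h1 : ((2*a + 1 - 1)/2 : ℕ) = a := by omega
    rw [h1]
    have h3 : ((2*a + 1 : ℕ) : ℝ) = 2 * (a:ℝ) + 1 := by push_cast; ring
    rw [h3]
    have ha' : (1:ℝ) ≤ (a:ℝ) := by exact_mod_cast ha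
    have d1 : 2 * (a:ℝ) + 1 - 1 + (a:ℝ) ≠ 0 := by nlinarith
    have d2 : 2 * (2 * (a:ℝ) + 1 - 1) ≠ 0 := by nlinarith
    field_simp
    ring

theorem statement_12 (ε : ℝ) (hε : 0 < ε) (k : ℕ) (hk : 3 ≤ k) :
    ∃ n0 : ℕ, ∀ n : ℕ, n0 ≤ n → ∀ w : Fin n → Fin n → ℝ,
      (∀ u v, w u v = w v u) → (∀ v, w v v = 0) →
      (∀ u v : Fin n, u ≠ v → w u v = 0 ∨ w u v = 1 / 2 ∨ w u v = 1) →
      ¬ HasWeightedClique w k →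
      weightE w ≤ (bconst k + ε) * (n : ℝ) ^ 2 := by
  refine ⟨0, fun n _ w hsym hdiag hvals hno => ?_⟩
  rcases Nat.eq_zero_or_pos n with rfl | hn
  · simp [weightE]
  · have hnpos : (0:ℝ) < (n:ℝ) := by exact_mod_cast hn
    set unif : Fin n → ℝ := fun _ => 1/(n:ℝ) with hunif
    have hmem : unif ∈ stdSimplex ℝ (Fin n) := by
      constructor
      · intro x
        rw [hunif]
        positivity
      · rw [hunif]
        rw [Finset.sum_const, Finset.card_univ, Fintype.card_fin, nsmul_eq_mul]
        field_simp
    have hkey := key_lemma hk w hsym hdiag hvals hno unif hmem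
    rw [bconst_eq hk] at hkey
    have hlam : lamW w unif = (∑ u, ∑ v, w u v) / (n:ℝ)^2 := by
      unfold lamW
      rw [Finset.sum_div]
      refine Finset.sum_congr rfl fun u _ => ?_
      rw [Finset.sum_div]
      refine Finset.sum_congr rfl fun v _ => ?_
      show w u v * (1/(n:ℝ)) * (1/(n:ℝ)) = w u v / (n:ℝ)^2
      rw [eq_div_iff (pow_ne_zero 2 hnpos.ne')]
      field_simp
    have hE : weightE w = ((n:ℝ)^2/2) * lamW w unif := by
      unfold weightE
      rw [hlam]
      have hne : (n:ℝ)^2 ≠ 0 := by positivity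
      field_simp
    rw [hE]
    have h1 : ((n:ℝ)^2/2) * lamW w unif ≤ ((n:ℝ)^2/2) * (2 * bconst k) := by
      apply mul_le_mul_of_nonneg_left hkey
      positivity
    have h2 : ((n:ℝ)^2/2) * (2 * bconst k) = bconst k * (n:ℝ)^2 := by ring
    nlinarith [sq_nonneg (n:ℝ)]
end

section
/- For every ε > 0 and every γ > 0 there exists n_0 such that for every n ≥ n_0 there exists a simple graph G on n vertices with independence number α(G) ≤ γ·n for которого the number of 3-edge-colorings of G containing no monochromatic K_3 is at least 2^((1/4 − ε)·n²). -/
open Finset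

lemma count_constrained {α β : Type*} [Fintype α] [DecidableEq α] [Fintype β] [DecidableEq β]
    (P : Finset α) (s : Finset β) :
    (univ.filter (fun f : α → β => ∀ a ∈ P, f a ∈ s)).card
      = s.card ^ P.card * (Fintype.card β) ^ (Fintype.card α - P.card) := by
  have h1 : univ.filter (fun f : α → β => ∀ a ∈ P, f a ∈ s)
      = Fintype.piFinset (fun a => if a ∈ P then s else univ) := by
    ext f
    simp only [mem_filter, mem_univ, true_and, Fintype.mem_piFinset]
    constructor
    · intro h a
      by_cases ha : a ∈ P
      · simpa [ha] using h a ha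
      · simp [ha]
    · intro h a ha
      have := h a
      rwa [if_pos ha] at this
  rw [h1, Fintype.card_piFinset]
  have h2 : ∀ a : α, (if a ∈ P then s else univ).card = if a ∈ P then s.card else Fintype.card β := by
    intro a; split <;> simp
  simp_rw [h2]
  rw [← Finset.prod_filter_mul_prod_filter_not univ (· ∈ P)]
  rw [Finset.prod_congr rfl (fun a ha => if_pos (mem_filter.mp ha).2),
      Finset.prod_congr rfl (fun a (ha : a ∈ univ.filter (· ∉ P)) => if_neg (mem_filter.mp ha).2)]
  rw [Finset.prod_const, Finset.prod_const]
  congr 1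
  · congr 1
    simp [Finset.filter_mem_eq_inter]
  · congr 1
    rw [← Finset.sdiff_eq_filter, card_sdiff_of_subset (subset_univ P), card_univ]

lemma filter_isDiag_sym2 {α : Type*} [DecidableEq α] (S : Finset α) :
    S.sym2.filter (fun e => e.IsDiag) = S.image Sym2.diag := by
  ext e
  induction e with
  | _ x y =>
    simp only [mem_filter, Finset.mk_mem_sym2_iff, Sym2.mk_isDiag_iff, mem_image]
    constructor
    · rintro ⟨⟨hx, hy⟩, rfl⟩
      exact ⟨x, hx, rfl⟩
    · rintro ⟨a, ha, he⟩
      rw [Sym2.diag] at he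
      obtain ⟨rfl, rfl⟩ : a = x ∧ a = y := by
        have := Sym2.eq_iff.mp he
        tauto
      exact ⟨⟨ha, ha⟩, rfl⟩

lemma card_sym2_offdiag {α : Type*} [DecidableEq α] (S : Finset α) :
    (S.sym2.filter (fun e => ¬ e.IsDiag)).card = S.card * (S.card - 1) / 2 := by
  have h0 := Finset.card_filter_add_card_filter_not (s := S.sym2)
    (p := fun e => e.IsDiag)
  rw [filter_isDiag_sym2, Finset.card_image_of_injective _ Sym2.diag_injective,
    Finset.card_sym2] at h0
  have h1 : (S.card + 1).choose 2 = (S.card + 1) * S.card / 2 := by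
    rw [Nat.choose_two_right]; simp
  cases hc : S.card with
  | zero =>
    rw [hc] at h0
    simp [Nat.choose] at h0
    simp [hc, h0]
    exact h0
  | succ d =>
    rw [hc] at h0 h1
    have h2 : (d + 1 + 1) * (d + 1) = (d + 1) * d + 2 * (d + 1) := by ring
    have h3 : (d + 1 + 1) * (d + 1) / 2 = (d + 1) * d / 2 + (d + 1) := by
      rw [h2, Nat.add_mul_div_left _ _ (by norm_num : 0 < 2)]
    simp only [Nat.succ_sub_one]
    omega

lemma even_mul_pred (c : ℕ) : 2 * (c * (c - 1) / 2) = c * (c - 1) := by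
  cases c with
  | zero => simp
  | succ d =>
    simp only [Nat.succ_sub_one]
    have : Even ((d + 1) * d) := by
      have := Nat.even_mul_succ_self d
      rwa [mul_comm] at this
    obtain ⟨t, ht⟩ := this
    omega

open scoped Classical in
noncomputable def PS {m : ℕ} (S : Finset (Fin m)) : Finset (Sym2 (Fin m)) :=
  S.sym2.filter (fun e => ¬ e.IsDiag)

lemma card_PS {m : ℕ} (S : Finset (Fin m)) : (PS S).card = S.card * (S.card - 1) / 2 := by
  classical
  rw [PS]
  convert card_sym2_offdiag S using 2

def Gf {m q : ℕ} (f : Sym2 (Fin m) → Fin q) [NeZero q] : SimpleGraph (Fin m) where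
  Adj u v := u ≠ v ∧ f s(u, v) = 0
  symm := by
    constructor
    rintro u v ⟨h1, h2⟩
    exact ⟨h1.symm, by rwa [Sym2.eq_swap]⟩
  loopless := by constructor; rintro u ⟨h1, _⟩; exact h1 rfl

open scoped Classical in
noncomputable def triSet {m q : ℕ} [NeZero q] (f : Sym2 (Fin m) → Fin q) :
    Finset (Finset (Fin m)) :=
  (univ.powersetCard 3).filter (fun S => ∀ e ∈ PS S, f e = 0)

open scoped Classical in
lemma bad1_card (m q k : ℕ) [NeZero q] :
    ((univ.powersetCard k).biUnion (fun S : Finset (Fin m) =>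
        univ.filter (fun f : Sym2 (Fin m) → Fin q => ∀ e ∈ PS S, f e ≠ 0))).card
      ≤ m.choose k * ((q - 1) ^ (k * (k - 1) / 2)
          * q ^ (Fintype.card (Sym2 (Fin m)) - k * (k - 1) / 2)) := by
  refine le_trans Finset.card_biUnion_le ?_
  have hterm : ∀ S ∈ univ.powersetCard k (α := Fin m),
      (univ.filter (fun f : Sym2 (Fin m) → Fin q => ∀ e ∈ PS S, f e ≠ 0)).card
        = (q - 1) ^ (k * (k - 1) / 2) * q ^ (Fintype.card (Sym2 (Fin m)) - k * (k - 1) / 2) := by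
    intro S hS
    have hcard : S.card = k := (Finset.mem_powersetCard_univ.mp hS)
    have h1 : univ.filter (fun f : Sym2 (Fin m) → Fin q => ∀ e ∈ PS S, f e ≠ 0)
        = univ.filter (fun f : Sym2 (Fin m) → Fin q =>
            ∀ e ∈ PS S, f e ∈ (univ \ {0} : Finset (Fin q))) := by
      apply Finset.filter_congr
      intro f _
      simp
    rw [h1, count_constrained, card_PS, hcard]
    rw [Finset.card_sdiff_of_subset (by simp), Finset.card_singleton, Finset.card_univ, Fintype.card_fin]
  rw [Finset.sum_congr rfl hterm, Finset.sum_const, Finset.card_powersetCard, Finset.card_univ,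
    Fintype.card_fin, smul_eq_mul]

open scoped Classical in
lemma tri_sum (m q : ℕ) [NeZero q] :
    ∑ f : Sym2 (Fin m) → Fin q, (triSet f).card
      = m.choose 3 * q ^ (Fintype.card (Sym2 (Fin m)) - 3) := by
  have h1 : ∀ f : Sym2 (Fin m) → Fin q, (triSet f).card
      = ∑ S ∈ univ.powersetCard 3 (α := Fin m), if (∀ e ∈ PS S, f e = 0) then 1 else 0 := by
    intro f
    rw [triSet, Finset.card_filter]
  simp_rw [h1]
  rw [Finset.sum_comm]
  have h2 : ∀ S ∈ univ.powersetCard 3 (α := Fin m),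
      ∑ f : Sym2 (Fin m) → Fin q, (if (∀ e ∈ PS S, f e = 0) then 1 else 0)
        = q ^ (Fintype.card (Sym2 (Fin m)) - 3) := by
    intro S hS
    have hcard : S.card = 3 := Finset.mem_powersetCard_univ.mp hS
    rw [← Finset.card_filter]
    have h3 : univ.filter (fun f : Sym2 (Fin m) → Fin q => ∀ e ∈ PS S, f e = 0)
        = univ.filter (fun f : Sym2 (Fin m) → Fin q =>
            ∀ e ∈ PS S, f e ∈ ({0} : Finset (Fin q))) := by
      apply Finset.filter_congr; intro f _; simp
    rw [h3, count_constrained, card_PS, hcard]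
    norm_num
  rw [Finset.sum_congr rfl h2, Finset.sum_const, Finset.card_powersetCard, Finset.card_univ,
    Fintype.card_fin, smul_eq_mul]

open scoped Classical in
lemma bad2_card (m q T : ℕ) [NeZero q] :
    (T + 1) * (univ.filter (fun f : Sym2 (Fin m) → Fin q => T + 1 ≤ (triSet f).card)).card
      ≤ m.choose 3 * q ^ (Fintype.card (Sym2 (Fin m)) - 3) := by
  rw [← tri_sum m q]
  calc (T + 1) * (univ.filter (fun f : Sym2 (Fin m) → Fin q => T + 1 ≤ (triSet f).card)).card
      = (univ.filter (fun f : Sym2 (Fin m) → Fin q => T + 1 ≤ (triSet f).card)).card • (T+1) := by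
        rw [smul_eq_mul, mul_comm]
    _ ≤ ∑ f ∈ univ.filter (fun f : Sym2 (Fin m) → Fin q => T + 1 ≤ (triSet f).card),
          (triSet f).card :=
        Finset.card_nsmul_le_sum _ _ _ (fun f hf => (Finset.mem_filter.mp hf).2)
    _ ≤ ∑ f : Sym2 (Fin m) → Fin q, (triSet f).card :=
        Finset.sum_le_sum_of_subset (Finset.filter_subset _ _)

lemma choose_le_two_pow (m k : ℕ) : m.choose k ≤ 2 ^ m := by
  by_cases h : k ≤ m
  · have h1 := Nat.sum_range_choose m
    have h2 : m.choose k ≤ ∑ i ∈ Finset.range (m + 1), m.choose i :=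
      Finset.single_le_sum (fun i _ => Nat.zero_le _) (Finset.mem_range.mpr (by omega))
    omega
  · rw [Nat.choose_eq_zero_of_lt (by omega)]
    positivity

lemma est1 (m k q j : ℕ) (hq : 1 ≤ q) (hj : q * (m + 1) ≤ j) :
    2 * (m.choose k : ℝ) * ((q : ℝ) - 1) ^ j ≤ (q : ℝ) ^ j := by
  have hq0 : (0 : ℝ) < q := by exact_mod_cast hq
  have e1 : (q : ℝ) - 1 ≤ q * Real.exp (-(1 / q)) := by
    have h := Real.add_one_le_exp (-(1 / (q : ℝ)))
    have h2 : (q : ℝ) * (-(1 / q) + 1) ≤ q * Real.exp (-(1 / q)) :=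
      mul_le_mul_of_nonneg_left h (le_of_lt hq0)
    calc (q : ℝ) - 1 = q * (-(1 / q) + 1) := by field_simp; ring
      _ ≤ _ := h2
  have e2 : ((q : ℝ) - 1) ^ j ≤ ((q : ℝ) * Real.exp (-(1 / q))) ^ j :=
    pow_le_pow_left₀ (by simp; exact_mod_cast hq) e1 j
  have e3 : ((q : ℝ) * Real.exp (-(1 / q))) ^ j = (q : ℝ) ^ j * Real.exp ((j : ℝ) * -(1 / q)) := by
    rw [mul_pow, Real.exp_nat_mul]
  have e4 : (j : ℝ) * -(1 / q) ≤ -((m : ℝ) + 1) := by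
    have hj' : ((q : ℝ) * (m + 1)) ≤ j := by exact_mod_cast hj
    rw [mul_neg, neg_le_neg_iff, mul_one_div, le_div_iff₀ hq0]
    linarith
  have e5 : 2 * (m.choose k : ℝ) ≤ Real.exp ((m : ℝ) + 1) := by
    have h1 : (m.choose k : ℝ) ≤ 2 ^ m := by exact_mod_cast choose_le_two_pow m k
    have h2 : (2 : ℝ) ≤ Real.exp 1 := by
      have := Real.add_one_le_exp (1 : ℝ); linarith
    have h3 : (2 : ℝ) * 2 ^ m = 2 ^ (m + 1) := by ring
    have h4 : (2 : ℝ) ^ (m + 1) ≤ Real.exp 1 ^ (m + 1) := by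
      apply pow_le_pow_left₀ (by norm_num : (0:ℝ) ≤ 2) h2
    have h5 : Real.exp 1 ^ (m + 1) = Real.exp ((m : ℝ) + 1) := by
      rw [← Real.exp_nat_mul]; congr 1; push_cast; ring
    have h0 : (0:ℝ) ≤ (m.choose k : ℝ) := Nat.cast_nonneg _
    nlinarith
  calc 2 * (m.choose k : ℝ) * ((q : ℝ) - 1) ^ j
      ≤ 2 * (m.choose k : ℝ) * ((q : ℝ) ^ j * Real.exp ((j : ℝ) * -(1 / q))) := by
        apply mul_le_mul_of_nonneg_left (by rw [← e3]; exact e2) (by positivity)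
    _ ≤ Real.exp ((m : ℝ) + 1) * ((q : ℝ) ^ j * Real.exp (-((m : ℝ) + 1))) := by
        apply mul_le_mul e5 (mul_le_mul_of_nonneg_left (Real.exp_le_exp.mpr e4) (by positivity))
          (by positivity) (by positivity)
    _ = (q : ℝ) ^ j * (Real.exp ((m : ℝ) + 1) * Real.exp (-((m : ℝ) + 1))) := by ring
    _ = (q : ℝ) ^ j := by
        rw [← Real.exp_add, show (m : ℝ) + 1 + -((m : ℝ) + 1) = 0 by ring, Real.exp_zero,
          mul_one]

open scoped Classical in
lemma exists_good (m k T q : ℕ) [NeZero q] (hm : 3 ≤ m) (hk1 : 1 ≤ k) (hkm : k ≤ m)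
    (hA : 2 * (q * (m + 1)) ≤ k * (k - 1))
    (hB : 3 * m ^ 3 ≤ (T + 1) * q ^ 3) :
    ∃ f : Sym2 (Fin m) → Fin q,
      (∀ S : Finset (Fin m), S.card = k → ∃ e ∈ PS S, f e = 0) ∧
      (triSet f).card ≤ T := by
  have hq : 1 ≤ q := Nat.one_le_iff_ne_zero.mpr (NeZero.ne q)
  set N := Fintype.card (Sym2 (Fin m)) with hN
  set j := k * (k - 1) / 2 with hj
  have hNval : N = (m + 1) * m / 2 := by
    rw [hN, Sym2.card, Fintype.card_fin, Nat.choose_two_right]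
    simp
  have hjN : j ≤ N := by
    rw [hj, hNval]
    apply Nat.div_le_div_right
    exact Nat.mul_le_mul (by omega) (by omega)
  have hN3 : 3 ≤ N := by
    rw [hNval]
    have : 4 * 3 ≤ (m + 1) * m := Nat.mul_le_mul (by omega) hm
    omega
  set B1 := ((univ.powersetCard k).biUnion (fun S : Finset (Fin m) =>
      univ.filter (fun f : Sym2 (Fin m) → Fin q => ∀ e ∈ PS S, f e ≠ 0))) with hB1
  set B2 := (univ.filter (fun f : Sym2 (Fin m) → Fin q => T + 1 ≤ (triSet f).card)) with hB2
  -- real bound on B1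
  have r1 : 2 * (B1.card : ℝ) ≤ (q : ℝ) ^ N := by
    have n1 := bad1_card m q k
    have hjq : q * (m + 1) ≤ j := by
      rw [hj]
      have h2 : 2 * (q * (m + 1)) / 2 ≤ k * (k - 1) / 2 := Nat.div_le_div_right hA
      simpa using h2
    have e1 := est1 m k q j hq hjq
    have hcast : (((q - 1 : ℕ)) : ℝ) = (q : ℝ) - 1 := by
      push_cast [Nat.cast_sub hq]
      ring
    have n1' : (B1.card : ℝ) ≤ (m.choose k : ℝ) * (((q:ℝ) - 1) ^ j * (q:ℝ) ^ (N - j)) := by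
      rw [← hcast]
      exact_mod_cast n1
    have e2 : 2 * ((m.choose k : ℝ) * (((q:ℝ) - 1) ^ j * (q:ℝ) ^ (N - j)))
        ≤ (q:ℝ) ^ j * (q:ℝ) ^ (N - j) := by
      have := mul_le_mul_of_nonneg_right e1 (by positivity : (0:ℝ) ≤ (q:ℝ) ^ (N - j))
      calc 2 * ((m.choose k : ℝ) * (((q:ℝ) - 1) ^ j * (q:ℝ) ^ (N - j)))
          = 2 * (m.choose k : ℝ) * ((q:ℝ) - 1) ^ j * (q:ℝ) ^ (N - j) := by ring
        _ ≤ (q:ℝ) ^ j * (q:ℝ) ^ (N - j) := this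
    have e3 : (q:ℝ) ^ j * (q:ℝ) ^ (N - j) = (q:ℝ) ^ N := by
      rw [← pow_add]
      congr 1
      exact Nat.add_sub_cancel' hjN
    linarith
  -- nat bound on B2
  have r2 : 3 * B2.card ≤ q ^ N := by
    have n2 := bad2_card m q T
    have c3 : m.choose 3 ≤ m ^ 3 := Nat.choose_le_pow m 3
    have step : (T + 1) * (3 * B2.card) ≤ (T + 1) * q ^ N := by
      calc (T + 1) * (3 * B2.card) = 3 * ((T + 1) * B2.card) := by ring
        _ ≤ 3 * (m.choose 3 * q ^ (N - 3)) := Nat.mul_le_mul_left 3 n2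
        _ ≤ 3 * (m ^ 3 * q ^ (N - 3)) := by
            apply Nat.mul_le_mul_left
            exact Nat.mul_le_mul_right _ c3
        _ = (3 * m ^ 3) * q ^ (N - 3) := by ring
        _ ≤ ((T + 1) * q ^ 3) * q ^ (N - 3) := Nat.mul_le_mul_right _ hB
        _ = (T + 1) * q ^ N := by
            rw [mul_assoc, ← pow_add]
            congr 2
            exact Nat.add_sub_cancel' hN3
    exact Nat.le_of_mul_le_mul_left step (by omega)
  -- combine
  have hcard : (B1 ∪ B2).card < Fintype.card (Sym2 (Fin m) → Fin q) := by
    have hfc : Fintype.card (Sym2 (Fin m) → Fin q) = q ^ N := by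
      rw [Fintype.card_fun, Fintype.card_fin]
    rw [hfc]
    have hqN : (0:ℝ) < (q:ℝ) ^ N := by positivity
    have hr : ((B1 ∪ B2).card : ℝ) < ((q ^ N : ℕ) : ℝ) := by
      push_cast
      have h1 : ((B1 ∪ B2).card : ℝ) ≤ (B1.card : ℝ) + (B2.card : ℝ) := by
        exact_mod_cast Finset.card_union_le B1 B2
      have h2 : (3 : ℝ) * B2.card ≤ (q:ℝ) ^ N := by exact_mod_cast r2
      linarith
    exact_mod_cast hr
  obtain ⟨f, hf⟩ : ∃ f : Sym2 (Fin m) → Fin q, f ∉ B1 ∪ B2 := by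
    by_contra hcon
    push_neg at hcon
    have : (univ : Finset (Sym2 (Fin m) → Fin q)) ⊆ B1 ∪ B2 := fun f _ => hcon f
    have h9 := Finset.card_le_card this
    rw [Finset.card_univ] at h9
    exact absurd hcard (not_lt.mpr h9)
  rw [Finset.mem_union] at hf
  push_neg at hf
  obtain ⟨hf1, hf2⟩ := hf
  refine ⟨f, ?_, ?_⟩
  · intro S hS
    by_contra hcon
    push_neg at hcon
    apply hf1
    rw [hB1, Finset.mem_biUnion]
    exact ⟨S, Finset.mem_powersetCard_univ.mpr hS, Finset.mem_filter.mpr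
      ⟨Finset.mem_univ _, fun e he => hcon e he⟩⟩
  · by_contra hcon
    push_neg at hcon
    exact hf2 (Finset.mem_filter.mpr ⟨Finset.mem_univ _, hcon⟩)

set_option maxHeartbeats 1000000 in
open scoped Classical in
lemma core_graph (δ : ℝ) (hδ : 0 < δ) : ∃ m0 : ℕ, ∀ m : ℕ, m0 ≤ m →
    ∃ H : SimpleGraph (Fin m), H.CliqueFree 3 ∧
      ∀ S : Finset (Fin m), (∀ u ∈ S, ∀ v ∈ S, u ≠ v → ¬ H.Adj u v) → (S.card : ℝ) ≤ δ * m := by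
  by_cases hδ1 : 1 ≤ δ
  · refine ⟨0, fun m _ => ⟨⊥, SimpleGraph.cliqueFree_bot (by norm_num), fun S _ => ?_⟩⟩
    have h1 : (S.card : ℝ) ≤ m := by
      have h2 := Finset.card_le_univ S
      have h3 : S.card ≤ m := by simpa using h2
      exact_mod_cast h3
    have h0 : (0:ℝ) ≤ (m:ℝ) := Nat.cast_nonneg _
    nlinarith
  push_neg at hδ1
  set C : ℝ := 24 * 256 ^ 3 / δ ^ 7 + 256 / δ ^ 2 + 64 / δ + 64 with hC
  refine ⟨⌈C⌉₊, fun m hm => ?_⟩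
  have hmC : C ≤ (m : ℝ) := le_trans (Nat.le_ceil C) (by exact_mod_cast hm)
  have hp1 : (0:ℝ) ≤ 24 * 256 ^ 3 / δ ^ 7 := by positivity
  have hp2 : (0:ℝ) ≤ 256 / δ ^ 2 := by positivity
  have hp3 : (0:ℝ) ≤ 64 / δ := by positivity
  have hm64 : (64 : ℝ) ≤ m := by rw [hC] at hmC; linarith
  have hmpos : (0:ℝ) < m := by linarith
  have hδm : 64 ≤ δ * m := by
    have h1 : 64 / δ ≤ (m:ℝ) := by rw [hC] at hmC; linarith
    rw [div_le_iff₀ hδ] at h1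
    linarith [h1]
  have hδ2m : 256 ≤ δ ^ 2 * m := by
    have h1 : 256 / δ ^ 2 ≤ (m:ℝ) := by rw [hC] at hmC; linarith
    rw [div_le_iff₀ (by positivity : (0:ℝ) < δ ^ 2)] at h1
    linarith [h1]
  have hδ7m : 24 * 256 ^ 3 ≤ δ ^ 7 * m := by
    have h1 : 24 * 256 ^ 3 / δ ^ 7 ≤ (m:ℝ) := by rw [hC] at hmC; linarith
    rw [div_le_iff₀ (by positivity : (0:ℝ) < δ ^ 7)] at h1
    linarith [h1]
  have hm3 : 3 ≤ m := by exact_mod_cast le_trans (by norm_num : (3:ℝ) ≤ 64) hm64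
  set k := ⌈δ / 2 * (m:ℝ)⌉₊ with hkdef
  set T := ⌈δ / 8 * (m:ℝ)⌉₊ with hTdef
  set q := ⌈δ ^ 2 / 256 * (m:ℝ)⌉₊ with hqdef
  have hk_lb : δ / 2 * m ≤ k := Nat.le_ceil _
  have hk_ub : (k:ℝ) ≤ δ / 2 * m + 1 := (Nat.ceil_lt_add_one (by positivity)).le
  have hT_lb : δ / 8 * m ≤ T := Nat.le_ceil _
  have hT_ub : (T:ℝ) ≤ δ / 8 * m + 1 := (Nat.ceil_lt_add_one (by positivity)).le
  have hq_lb : δ ^ 2 / 256 * m ≤ q := Nat.le_ceil _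
  have hq_ub : (q:ℝ) ≤ δ ^ 2 / 256 * m + 1 := (Nat.ceil_lt_add_one (by positivity)).le
  have hk1 : 1 ≤ k := Nat.ceil_pos.mpr (by positivity)
  have hq1 : 1 ≤ q := Nat.ceil_pos.mpr (by positivity)
  haveI : NeZero q := ⟨by omega⟩
  have hkm : k ≤ m := Nat.ceil_le.mpr (by nlinarith)
  have hkc : ((k - 1 : ℕ) : ℝ) = (k:ℝ) - 1 := by
    rw [Nat.cast_sub hk1, Nat.cast_one]
  -- condition A
  have hAreal : (2:ℝ) * ((q:ℝ) * ((m:ℝ) + 1)) ≤ (k:ℝ) * ((k:ℝ) - 1) := by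
    have hbm : 256 * (m:ℝ) ≤ (δ ^ 2 * m) * m := mul_le_mul_of_nonneg_right hδ2m hmpos.le
    have hYZ : δ ^ 2 * m ≤ δ * m := by nlinarith
    have hZm : δ * m ≤ m := by nlinarith
    have hkk : (δ / 2 * m) * (δ / 2 * m - 1) ≤ (k:ℝ) * ((k:ℝ) - 1) := by
      apply mul_le_mul hk_lb (by linarith) (by linarith) (Nat.cast_nonneg _)
    have hq2 : 2 * ((q:ℝ) * ((m:ℝ) + 1)) ≤ 2 * ((δ ^ 2 / 256 * m + 1) * ((m:ℝ) + 1)) := by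
      have : (0:ℝ) ≤ (m:ℝ) + 1 := by linarith
      nlinarith [hq_ub]
    have hfin : 2 * ((δ ^ 2 / 256 * m + 1) * ((m:ℝ) + 1)) ≤ (δ / 2 * m) * (δ / 2 * m - 1) := by
      nlinarith [hbm, hδm, hδ2m, hYZ, hZm, hmpos.le]
    linarith
  have hA : 2 * (q * (m + 1)) ≤ k * (k - 1) := by
    have h := hAreal
    rw [← hkc] at h
    exact_mod_cast h
  -- condition B
  have hBreal : 3 * ((m:ℝ)) ^ 3 ≤ ((T:ℝ) + 1) * (q:ℝ) ^ 3 := by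
    have hq3 : (δ ^ 2 / 256 * (m:ℝ)) ^ 3 ≤ (q:ℝ) ^ 3 :=
      pow_le_pow_left₀ (by positivity) hq_lb 3
    have hT' : δ / 8 * m ≤ (T:ℝ) + 1 := by linarith
    have hprod : (δ / 8 * m) * (δ ^ 2 / 256 * (m:ℝ)) ^ 3 ≤ ((T:ℝ) + 1) * (q:ℝ) ^ 3 :=
      mul_le_mul hT' hq3 (by positivity) (by linarith [hT_lb, hmpos] : (0:ℝ) ≤ (T:ℝ) + 1)
    have hmono : 24 * 256 ^ 3 * (m:ℝ) ^ 3 ≤ (δ ^ 7 * m) * (m:ℝ) ^ 3 :=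
      mul_le_mul_of_nonneg_right hδ7m (by positivity)
    nlinarith [hprod, hmono]
  have hB : 3 * m ^ 3 ≤ (T + 1) * q ^ 3 := by exact_mod_cast hBreal
  obtain ⟨f, hgood1, hgood2⟩ := exists_good m k T q hm3 hk1 hkm hA hB
  set V0 : Finset (Fin m) := (triSet f).biUnion id with hV0def
  refine ⟨⟨fun u v => (Gf f).Adj u v ∧ u ∉ V0 ∧ v ∉ V0,
    by constructor; rintro u v ⟨h1, h2, h3⟩; exact ⟨h1.symm, h3, h2⟩,
    by constructor; rintro u ⟨h1, _⟩; exact (Gf f).irrefl h1⟩, ?_, ?_⟩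
  · -- clique free
    intro S hS
    have hScard : S.card = 3 := hS.2
    have hTmem : S ∈ triSet f := by
      rw [triSet, Finset.mem_filter]
      refine ⟨Finset.mem_powersetCard_univ.mpr hScard, ?_⟩
      intro e
      induction e with
      | _ x y =>
        intro he
        rw [PS, Finset.mem_filter, Finset.mk_mem_sym2_iff] at he
        obtain ⟨⟨hx, hy⟩, hd⟩ := he
        have hxy : x ≠ y := by simpa using hd
        have hadj := hS.1 hx hy hxy
        exact hadj.1.2
    have hne : S.Nonempty := by rw [← Finset.card_pos, hScard]; norm_num
    obtain ⟨u, hu⟩ := hne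
    have huV0 : u ∈ V0 := Finset.mem_biUnion.mpr ⟨S, hTmem, hu⟩
    obtain ⟨v, hv, hvu⟩ := Finset.exists_mem_ne (by rw [hScard]; norm_num) u
    have hadj := hS.1 hv hu hvu
    exact hadj.2.2 huV0
  · -- independence
    intro S hindep
    have hSdiff : ∀ u ∈ S \ V0, ∀ v ∈ S \ V0, u ≠ v → ¬ (Gf f).Adj u v := by
      intro u hu v hv huv hadj
      rw [Finset.mem_sdiff] at hu hv
      exact hindep u hu.1 v hv.1 huv ⟨hadj, hu.2, hv.2⟩
    have hsmall : (S \ V0).card < k := by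
      by_contra hge
      push_neg at hge
      obtain ⟨S', hsub, hcard⟩ := Finset.exists_subset_card_eq hge
      obtain ⟨e, he, hfe⟩ := hgood1 S' hcard
      rw [PS, Finset.mem_filter] at he
      obtain ⟨he1, he2⟩ := he
      induction e with
      | _ x y =>
        rw [Finset.mk_mem_sym2_iff] at he1
        have hxy : x ≠ y := by simpa using he2
        exact hSdiff x (hsub he1.1) y (hsub he1.2) hxy ⟨hxy, hfe⟩
    have hV0card : V0.card ≤ 3 * T := by
      calc V0.card ≤ ∑ S' ∈ triSet f, (id S').card := Finset.card_biUnion_le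
        _ = ∑ S' ∈ triSet f, 3 := Finset.sum_congr rfl (fun S' hS' => by
            simp only [id]
            exact Finset.mem_powersetCard_univ.mp (Finset.mem_filter.mp hS').1)
        _ = 3 * (triSet f).card := by rw [Finset.sum_const, smul_eq_mul, mul_comm]
        _ ≤ 3 * T := Nat.mul_le_mul_left 3 hgood2
    have hcard_le : S.card ≤ (k - 1) + 3 * T := by
      have h1 := Finset.card_le_card_sdiff_add_card (s := S) (t := V0)
      omega
    have hreal : (S.card : ℝ) ≤ ((k:ℝ) - 1) + 3 * T := by
      have h2 : ((((k - 1) + 3 * T : ℕ)) : ℝ) = ((k:ℝ) - 1) + 3 * T := by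
        push_cast [hkc]
        ring
      rw [← h2]
      exact_mod_cast hcard_le
    have : ((k:ℝ) - 1) + 3 * (T:ℝ) ≤ δ * m := by
      have := hk_ub
      have := hT_ub
      nlinarith [hδm]
    linarith

/-- The bipartite-plus-inside construction. -/
def BiG (n h : ℕ) (HA : SimpleGraph (Fin h)) (HB : SimpleGraph (Fin (n - h))) :
    SimpleGraph (Fin n) where
  Adj u v := (u.val < h ∧ h ≤ v.val) ∨ (v.val < h ∧ h ≤ u.val) ∨
    (∃ (hu : u.val < h) (hv : v.val < h), HA.Adj ⟨u.val, hu⟩ ⟨v.val, hv⟩) ∨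
    (∃ (hu : h ≤ u.val) (hv : h ≤ v.val),
      HB.Adj ⟨u.val - h, by have := u.isLt; omega⟩ ⟨v.val - h, by have := v.isLt; omega⟩)
  symm := by
    constructor
    rintro u v (⟨h1, h2⟩ | ⟨h1, h2⟩ | ⟨h1, h2, h3⟩ | ⟨h1, h2, h3⟩)
    · exact Or.inr (Or.inl ⟨h1, h2⟩)
    · exact Or.inl ⟨h1, h2⟩
    · exact Or.inr (Or.inr (Or.inl ⟨h2, h1, h3.symm⟩))
    · exact Or.inr (Or.inr (Or.inr ⟨h2, h1, h3.symm⟩))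
  loopless := by
    constructor
    rintro u (⟨h1, h2⟩ | ⟨h1, h2⟩ | ⟨h1, h2, h3⟩ | ⟨h1, h2, h3⟩)
    · omega
    · omega
    · exact HA.irrefl h3
    · exact HB.irrefl h3

/-- The symmetric color function. -/
def gcol (n h : ℕ) (ψ : Fin h × Fin (n - h) → Fin 2) (u v : Fin n) : Fin 3 :=
  if hu : u.val < h then
    (if hv : v.val < h then (2 : Fin 3)
     else Fin.castLE (by norm_num)
        (ψ (⟨u.val, hu⟩, ⟨v.val - h, by have := v.isLt; omega⟩)))
  else
    (if hv : v.val < h then Fin.castLE (by norm_num)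
        (ψ (⟨v.val, hv⟩, ⟨u.val - h, by have := u.isLt; omega⟩))
     else (2 : Fin 3))

lemma gcol_symm (n h : ℕ) (ψ : Fin h × Fin (n - h) → Fin 2) (u v : Fin n) :
    gcol n h ψ u v = gcol n h ψ v u := by
  unfold gcol
  by_cases hu : u.val < h <;> by_cases hv : v.val < h <;> simp [hu, hv]

noncomputable def colmap (n h : ℕ) (HA : SimpleGraph (Fin h)) (HB : SimpleGraph (Fin (n - h)))
    (ψ : Fin h × Fin (n - h) → Fin 2) : (BiG n h HA HB).edgeSet → Fin 3 :=
  fun e => Sym2.lift ⟨gcol n h ψ, fun u v => gcol_symm n h ψ u v⟩ e.1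

lemma colmap_eval (n h : ℕ) (HA : SimpleGraph (Fin h)) (HB : SimpleGraph (Fin (n - h)))
    (ψ : Fin h × Fin (n - h) → Fin 2) (u v : Fin n) (hadj : (BiG n h HA HB).Adj u v) :
    colmap n h HA HB ψ ⟨s(u, v), hadj⟩ = gcol n h ψ u v := by
  simp [colmap]

lemma gcol_same (n h : ℕ) (ψ : Fin h × Fin (n - h) → Fin 2) (u v : Fin n)
    (hs : u.val < h ↔ v.val < h) : gcol n h ψ u v = 2 := by
  unfold gcol
  by_cases hu : u.val < h
  · rw [dif_pos hu, dif_pos (hs.mp hu)]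
  · rw [dif_neg hu, dif_neg (fun hv => hu (hs.mpr hv))]

lemma gcol_cross (n h : ℕ) (ψ : Fin h × Fin (n - h) → Fin 2) (u v : Fin n)
    (hs : ¬ (u.val < h ↔ v.val < h)) : (gcol n h ψ u v).val ≤ 1 := by
  unfold gcol
  by_cases hu : u.val < h <;> by_cases hv : v.val < h
  · exact absurd (iff_of_true hu hv) hs
  · rw [dif_pos hu, dif_neg hv, Fin.coe_castLE]
    have := (ψ (⟨u.val, hu⟩, ⟨v.val - h, by have := v.isLt; omega⟩)).isLt
    omega
  · rw [dif_neg hu, dif_pos hv, Fin.coe_castLE]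
    have := (ψ (⟨v.val, hv⟩, ⟨u.val - h, by have := u.isLt; omega⟩)).isLt
    omega
  · exact absurd (iff_of_false hu hv) hs

lemma BiG_adj_A {n h : ℕ} {HA : SimpleGraph (Fin h)} {HB : SimpleGraph (Fin (n - h))}
    {u v : Fin n} (hadj : (BiG n h HA HB).Adj u v) (hu : u.val < h) (hv : v.val < h) :
    HA.Adj ⟨u.val, hu⟩ ⟨v.val, hv⟩ := by
  rcases hadj with (⟨h1, h2⟩ | ⟨h1, h2⟩ | ⟨h1, h2, h3⟩ | ⟨h1, h2, h3⟩)
  · omega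
  · omega
  · exact h3
  · omega

lemma BiG_adj_B {n h : ℕ} {HA : SimpleGraph (Fin h)} {HB : SimpleGraph (Fin (n - h))}
    {u v : Fin n} (hadj : (BiG n h HA HB).Adj u v) (hu : ¬ u.val < h) (hv : ¬ v.val < h) :
    HB.Adj ⟨u.val - h, by have := u.isLt; omega⟩ ⟨v.val - h, by have := v.isLt; omega⟩ := by
  rcases hadj with (⟨h1, h2⟩ | ⟨h1, h2⟩ | ⟨h1, h2, h3⟩ | ⟨h1, h2, h3⟩)
  · omega
  · omega
  · omega
  · exact h3

lemma no_mono (n h : ℕ) (HA : SimpleGraph (Fin h)) (HB : SimpleGraph (Fin (n - h)))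
    (hCFA : HA.CliqueFree 3) (hCFB : HB.CliqueFree 3) (ψ : Fin h × Fin (n - h) → Fin 2) :
    ¬ HasMonoClique (BiG n h HA HB) (colmap n h HA HB ψ) 3 := by
  rintro ⟨S, c, hcard, hmono⟩
  obtain ⟨x, y, z, hxy, hxz, hyz, hSeq⟩ := Finset.card_eq_three.mp hcard
  have hx : x ∈ S := by rw [hSeq]; simp
  have hy : y ∈ S := by rw [hSeq]; simp
  have hz : z ∈ S := by rw [hSeq]; simp
  -- mixed helper
  have mixed : ∀ u v w : Fin n, u ∈ S → v ∈ S → w ∈ S → u ≠ v → u ≠ w →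
      (u.val < h ↔ v.val < h) → ¬ (u.val < h ↔ w.val < h) → False := by
    intro u v w hu hv hw huv huw hsame hcross
    obtain ⟨ha1, hc1⟩ := hmono u hu v hv huv
    obtain ⟨ha2, hc2⟩ := hmono u hu w hw huw
    rw [colmap_eval] at hc1 hc2
    rw [gcol_same n h ψ u v hsame] at hc1
    have h2 := gcol_cross n h ψ u w hcross
    rw [hc2] at h2
    rw [← hc1] at h2
    norm_num at h2
  by_cases px : x.val < h <;> by_cases py : y.val < h <;> by_cases pz : z.val < h
  · -- all in A
    have a1 := BiG_adj_A (hmono x hx y hy hxy).1 px py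
    have a2 := BiG_adj_A (hmono x hx z hz hxz).1 px pz
    have a3 := BiG_adj_A (hmono y hy z hz hyz).1 py pz
    exact hCFA _ (SimpleGraph.is3Clique_triple_iff.mpr ⟨a1, a2, a3⟩)
  · exact mixed x y z hx hy hz hxy hxz (iff_of_true px py) (by simp [px, pz])
  · exact mixed x z y hx hz hy hxz hxy (iff_of_true px pz) (by simp [px, py])
  · exact mixed y z x hy hz hx hyz (Ne.symm hxy) (iff_of_false py pz) (by simp [py, px])
  · exact mixed y z x hy hz hx hyz (Ne.symm hxy) (iff_of_true py pz) (by simp [py, px])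
  · exact mixed x z y hx hz hy hxz hxy (iff_of_false px pz) (by simp [px, py])
  · exact mixed x y z hx hy hz hxy hxz (iff_of_false px py) (by simp [px, pz])
  · -- all in B
    have a1 := BiG_adj_B (hmono x hx y hy hxy).1 px py
    have a2 := BiG_adj_B (hmono x hx z hz hxz).1 px pz
    have a3 := BiG_adj_B (hmono y hy z hz hyz).1 py pz
    refine hCFB _ (SimpleGraph.is3Clique_triple_iff.mpr ⟨a1, a2, a3⟩)

lemma colorings_lower (n h : ℕ) (hh : h ≤ n) (HA : SimpleGraph (Fin h))
    (HB : SimpleGraph (Fin (n - h))) (hCFA : HA.CliqueFree 3) (hCFB : HB.CliqueFree 3) :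
    2 ^ (h * (n - h)) ≤ numColorings (BiG n h HA HB) 3 3 := by
  set G := BiG n h HA HB with hG
  have hinj : Function.Injective (fun ψ : Fin h × Fin (n - h) → Fin 2 =>
      (⟨colmap n h HA HB ψ, no_mono n h HA HB hCFA hCFB ψ⟩ :
        {φ : G.edgeSet → Fin 3 // ¬ HasMonoClique G φ 3})) := by
    intro ψ ψ' hψ
    simp only [Subtype.mk.injEq] at hψ
    funext p
    obtain ⟨a, b⟩ := p
    have hbn : h + b.val < n := by have := b.isLt; omega
    set u : Fin n := ⟨a.val, lt_of_lt_of_le a.isLt hh⟩ with hu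
    set v : Fin n := ⟨h + b.val, hbn⟩ with hv
    have hadj : G.Adj u v := Or.inl ⟨a.isLt, by simp [hv]⟩
    have heq := congrFun hψ ⟨s(u, v), hadj⟩
    rw [colmap_eval, colmap_eval] at heq
    unfold gcol at heq
    have hu1 : u.val < h := a.isLt
    have hv1 : ¬ v.val < h := by simp [hv]
    rw [dif_pos hu1, dif_neg hv1, dif_pos hu1, dif_neg hv1] at heq
    have hfix : (⟨u.val, hu1⟩ : Fin h) = a := by
      apply Fin.ext
      simp [hu]
    have hfix2 : (⟨v.val - h, by have := v.isLt; omega⟩ : Fin (n - h)) = b := by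
      apply Fin.ext
      simp [hv]
    rw [hfix, hfix2] at heq
    exact Fin.castLE_injective (by norm_num) heq
  have hle := Nat.card_le_card_of_injective _ hinj
  have hcount : Nat.card (Fin h × Fin (n - h) → Fin 2) = 2 ^ (h * (n - h)) := by
    rw [Nat.card_eq_fintype_card, Fintype.card_fun]
    simp
  rw [numColorings, ← hcount]
  exact hle

lemma BiG_indep (n h : ℕ) (hh : h ≤ n) (γ : ℝ) (hγ : 0 < γ) (HA : SimpleGraph (Fin h))
    (HB : SimpleGraph (Fin (n - h)))
    (hIA : ∀ S : Finset (Fin h), (∀ u ∈ S, ∀ v ∈ S, u ≠ v → ¬ HA.Adj u v) → (S.card : ℝ) ≤ γ * h)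
    (hIB : ∀ S : Finset (Fin (n - h)),
      (∀ u ∈ S, ∀ v ∈ S, u ≠ v → ¬ HB.Adj u v) → (S.card : ℝ) ≤ γ * (n - h : ℕ)) :
    indepLE (BiG n h HA HB) (γ * n) := by
  classical
  intro S hind
  by_cases hall : ∀ u ∈ S, u.val < h
  · -- all in A
    set S' : Finset (Fin h) :=
      S.attach.image (fun u => (⟨u.1.val, hall u.1 u.2⟩ : Fin h)) with hS'
    have hcard : S'.card = S.card := by
      rw [hS', Finset.card_image_of_injOn, Finset.card_attach]
      intro x _ y _ hxy
      apply Subtype.ext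
      apply Fin.ext
      have h1 := congrArg Fin.val hxy
      simpa using h1
    have hind' : ∀ u ∈ S', ∀ v ∈ S', u ≠ v → ¬ HA.Adj u v := by
      intro x hx y hy hne hadj
      rw [hS', Finset.mem_image] at hx hy
      obtain ⟨x', _, rfl⟩ := hx
      obtain ⟨y', _, rfl⟩ := hy
      have hxy' : x'.1 ≠ y'.1 := by
        intro hcon
        apply hne
        apply Fin.ext
        simp [hcon]
      apply hind x'.1 x'.2 y'.1 y'.2 hxy'
      exact Or.inr (Or.inr (Or.inl ⟨hall x'.1 x'.2, hall y'.1 y'.2, hadj⟩))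
    have h1 := hIA S' hind'
    rw [hcard] at h1
    have h2 : γ * (h : ℝ) ≤ γ * n := by
      apply mul_le_mul_of_nonneg_left _ hγ.le
      exact_mod_cast hh
    linarith
  · -- some element not < h: then all not < h
    push_neg at hall
    obtain ⟨w, hw, hwh⟩ := hall
    have hallB : ∀ u ∈ S, ¬ u.val < h := by
      intro u hu hcon
      by_cases huw : u = w
      · rw [huw] at hcon; omega
      · exact hind u hu w hw huw (Or.inl ⟨hcon, by omega⟩)
    set S' : Finset (Fin (n - h)) :=
      S.attach.image (fun u =>
        (⟨u.1.val - h, by have := u.1.isLt; have := hallB u.1 u.2; omega⟩ : Fin (n - h))) with hS'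
    have hcard : S'.card = S.card := by
      rw [hS', Finset.card_image_of_injOn, Finset.card_attach]
      intro x _ y _ hxy
      apply Subtype.ext
      apply Fin.ext
      have h1 := congrArg Fin.val hxy
      simp only at h1
      have := hallB x.1 x.2
      have := hallB y.1 y.2
      omega
    have hind' : ∀ u ∈ S', ∀ v ∈ S', u ≠ v → ¬ HB.Adj u v := by
      intro x hx y hy hne hadj
      rw [hS', Finset.mem_image] at hx hy
      obtain ⟨x', _, rfl⟩ := hx
      obtain ⟨y', _, rfl⟩ := hy
      have hxy' : x'.1 ≠ y'.1 := by
        intro hcon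
        apply hne
        apply Fin.ext
        simp [hcon]
      apply hind x'.1 x'.2 y'.1 y'.2 hxy'
      refine Or.inr (Or.inr (Or.inr ⟨by have := hallB x'.1 x'.2; omega,
        by have := hallB y'.1 y'.2; omega, ?_⟩))
      convert hadj using 2
    have h1 := hIB S' hind'
    rw [hcard] at h1
    have h2 : γ * ((n - h : ℕ) : ℝ) ≤ γ * n := by
      apply mul_le_mul_of_nonneg_left _ hγ.le
      have : (n - h : ℕ) ≤ n := by omega
      exact_mod_cast this
    linarith

theorem statement_13 (ε : ℝ) (hε : 0 < ε) (γ : ℝ) (hγ : 0 < γ) :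
    ∃ n0 : ℕ, ∀ n : ℕ, n0 ≤ n → ∃ G : SimpleGraph (Fin n),
      indepLE G (γ * n) ∧
      (2 : ℝ) ^ ((1 / 4 - ε) * (n : ℝ) ^ 2) ≤ (numColorings G 3 3 : ℝ) := by
  obtain ⟨m0, hm0⟩ := core_graph γ hγ
  refine ⟨max (2 * m0 + 4) (⌈1 / ε⌉₊ + 4), fun n hn => ?_⟩
  have hn1 : 2 * m0 + 4 ≤ n := le_trans (le_max_left _ _) hn
  have hn2 : ⌈1 / ε⌉₊ + 4 ≤ n := le_trans (le_max_right _ _) hn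
  set h : ℕ := n / 2 with hdef
  have hh : h ≤ n := Nat.div_le_self n 2
  have hA0 : m0 ≤ h := by omega
  have hB0 : m0 ≤ n - h := by omega
  obtain ⟨HA, hCFA, hIA⟩ := hm0 h hA0
  obtain ⟨HB, hCFB, hIB⟩ := hm0 (n - h) hB0
  refine ⟨BiG n h HA HB, BiG_indep n h hh γ hγ HA HB hIA hIB, ?_⟩
  have hcount := colorings_lower n h hh HA HB hCFA hCFB
  -- real exponent inequality
  have hεn : 1 ≤ ε * n := by
    have h1 : (1 : ℝ) / ε ≤ ⌈1 / ε⌉₊ := Nat.le_ceil _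
    have h2 : ((⌈1 / ε⌉₊ : ℕ) : ℝ) ≤ n := by exact_mod_cast by omega
    have h3 : 1 / ε ≤ (n : ℝ) := le_trans h1 h2
    rw [div_le_iff₀ hε] at h3
    linarith
  have hhr : 2 * (h : ℝ) + 1 ≥ n := by
    have : 2 * h + 1 ≥ n := by omega
    exact_mod_cast this
  have hsum : (h : ℝ) + ((n - h : ℕ) : ℝ) = n := by
    have : h + (n - h) = n := by omega
    exact_mod_cast this
  have hn4 : (4 : ℝ) ≤ n := by
    have : (4 : ℕ) ≤ n := by omega
    exact_mod_cast this
  have hexp : (1 / 4 - ε) * (n : ℝ) ^ 2 ≤ ((h * (n - h) : ℕ) : ℝ) := by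
    have hcast : ((h * (n - h) : ℕ) : ℝ) = (h : ℝ) * ((n - h : ℕ) : ℝ) := by push_cast; ring
    rw [hcast]
    have ha0 : (0:ℝ) ≤ (h : ℝ) := Nat.cast_nonneg _
    have hb0 : (0:ℝ) ≤ ((n - h : ℕ) : ℝ) := Nat.cast_nonneg _
    have hdiff : ((n - h : ℕ) : ℝ) - (h : ℝ) ≤ 1 := by
      have h1 : (n - h) ≤ h + 1 := by omega
      have h2 : ((n - h : ℕ) : ℝ) ≤ (h : ℝ) + 1 := by exact_mod_cast h1
      linarith
    have hdiff2 : (h : ℝ) ≤ ((n - h : ℕ) : ℝ) := by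
      have h1 : h ≤ n - h := by omega
      exact_mod_cast h1
    have hsq : (((n - h : ℕ) : ℝ) - (h : ℝ)) ^ 2 ≤ 1 := by nlinarith
    have hεn2 : (n : ℝ) ≤ ε * (n : ℝ) ^ 2 := by nlinarith
    nlinarith [hsum, hsq, hεn2, hn4]
  calc (2 : ℝ) ^ ((1 / 4 - ε) * (n : ℝ) ^ 2)
      ≤ (2 : ℝ) ^ (((h * (n - h) : ℕ) : ℝ)) :=
        Real.rpow_le_rpow_of_exponent_le one_le_two hexp
    _ = ((2 ^ (h * (n - h)) : ℕ) : ℝ) := by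
        rw [Real.rpow_natCast]
        push_cast
        ring
    _ ≤ (numColorings (BiG n h HA HB) 3 3 : ℝ) := by exact_mod_cast hcount
end
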